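/- arXiv:1406.1432 — 7 statements merged into one kernel-verified Lean document; each statement's English description precedes it below -/
import Mathlib

section
/- Let Y_1,...,Y_N be i.i.d. strictly positive integrable random variables, let η_i = Y_i / (Y_1 + ... + Y_N), and let b_1 ≥ ... ≥ b_a ≥ 2 be integers with b = b_1 + ... + b_a and a ≤ N. Then E[η_1^{b_1} ⋯ η_a^{b_a}] = (1/Γ(b)) ∫_0^∞ u^{b-1} I_0(u)^{N-a} I_{b_1}(u) ⋯ I_{b_a}(u) du, where I_p(u) = E[Y_1^p e^{-u Y_1}]. -/
open MeasureTheory ProbabilityTheory Finset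

section Aux

lemma aux_integral_prod {Ω : Type*} [MeasurableSpace Ω] {P : Measure Ω} [IsProbabilityMeasure P]
    {ι : Type*} {f : ι → Ω → ℝ} (hindep : iIndepFun f P)
    (hmeas : ∀ i, Measurable (f i)) (s : Finset ι) :
    ∫ ω, ∏ i ∈ s, f i ω ∂P = ∏ i ∈ s, ∫ ω, f i ω ∂P := by
  classical
  induction s using Finset.cons_induction with
  | empty => simp
  | cons i s hi ih =>
    rw [Finset.prod_cons]
    have hid : IndepFun (f i) (∏ j ∈ s, f j) P :=
      (hindep.indepFun_finsetProd_of_notMem hmeas hi).symm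
    have hprodmeas : Measurable (∏ j ∈ s, f j) := by
      rw [Finset.prod_fn]
      exact Finset.measurable_prod s (fun j _ => hmeas j)
    have h2 := hid.integral_mul_eq_mul_integral (hmeas i).aestronglyMeasurable hprodmeas.aestronglyMeasurable
    simp only [Finset.prod_apply, Pi.mul_apply] at h2
    calc ∫ ω, ∏ j ∈ cons i s hi, f j ω ∂P
        = ∫ ω, f i ω * ∏ j ∈ s, f j ω ∂P := by simp only [Finset.prod_cons]
      _ = (∫ ω, f i ω ∂P) * integral P (∏ j ∈ s, f j) := by rw [h2, Finset.prod_fn]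
      _ = (∫ ω, f i ω ∂P) * ∫ ω, ∏ j ∈ s, f j ω ∂P := by rw [Finset.prod_fn]
      _ = (∫ ω, f i ω ∂P) * ∏ j ∈ s, ∫ ω, f j ω ∂P := by rw [ih]

lemma aux_split {M : Type*} [CommMonoid M] {N a : ℕ} (haN : a ≤ N) (F : Fin N → M) :
    ∏ i : Fin N, F i =
      (∏ j : Fin a, F (Fin.castLE haN j)) *
        ∏ i ∈ univ.filter (fun i : Fin N => ¬ (i : ℕ) < a), F i := by
  rw [← Finset.prod_filter_mul_prod_filter_not univ (fun i : Fin N => (i : ℕ) < a)]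
  congr 1
  refine (Finset.prod_bij (fun (j : Fin a) _ => Fin.castLE haN j) ?_ ?_ ?_ ?_).symm
  · intro j _; simp [Fin.castLE, j.isLt]
  · intro j _ k _ h
    exact Fin.ext (congrArg Fin.val h : ((Fin.castLE haN j : Fin N) : ℕ) = (Fin.castLE haN k : Fin N))
  · intro i hi
    simp only [mem_filter, mem_univ, true_and] at hi
    exact ⟨⟨i, hi⟩, by simp, by ext; simp⟩
  · intro j _; rfl

lemma aux_card {N a : ℕ} (haN : a ≤ N) :
    (univ.filter (fun i : Fin N => ¬ (i : ℕ) < a)).card = N - a := by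
  have h1 : (univ.filter (fun i : Fin N => (i : ℕ) < a)).card = a := by
    have : (univ.filter (fun i : Fin N => (i : ℕ) < a)).card = (univ : Finset (Fin a)).card := by
      refine Finset.card_bij (fun i hi => (⟨(i : ℕ), (mem_filter.mp hi).2⟩ : Fin a)) ?_ ?_ ?_
      · intro i _; exact mem_univ _
      · intro i hi k hk h
        have h2 := congrArg (fun x : Fin a => (x : ℕ)) h
        exact Fin.ext h2
      · intro j _
        exact ⟨Fin.castLE haN j, by simp [Fin.castLE, j.isLt], by ext; simp⟩
    simpa using this
  have h2 := Finset.card_filter_add_card_filter_not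
    (s := (univ : Finset (Fin N))) (p := fun i : Fin N => (i : ℕ) < a)
  simp only [Finset.card_univ, Fintype.card_fin] at h2
  omega

lemma aux_key_integral {B : ℕ} (hB1 : 1 ≤ B) {r : ℝ} (hr : 0 < r) :
    ∫ u in Set.Ioi (0:ℝ), u ^ (B - 1) * Real.exp (-u * r) = (1 / r) ^ B * Real.Gamma B := by
  have h := Real.integral_rpow_mul_exp_neg_mul_Ioi (a := (B : ℝ)) (r := r)
    (by exact_mod_cast Nat.lt_of_lt_of_le Nat.zero_lt_one hB1) hr
  have hcast : ((B : ℝ) - 1) = ((B - 1 : ℕ) : ℝ) := by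
    rw [Nat.cast_sub hB1]; norm_num
  rw [show ((1:ℝ)/r) ^ B = (1/r) ^ (B:ℝ) by rw [Real.rpow_natCast]]
  rw [← h]
  refine setIntegral_congr_fun measurableSet_Ioi (fun t ht => ?_)
  rw [hcast, Real.rpow_natCast]
  ring_nf

lemma aux_key_integrable {B : ℕ} (hB1 : 1 ≤ B) {r : ℝ} (hr : 0 < r) :
    IntegrableOn (fun u : ℝ => u ^ (B - 1) * Real.exp (-u * r)) (Set.Ioi 0) := by
  have h := integrableOn_rpow_mul_exp_neg_mul_rpow (s := (B : ℝ) - 1) (p := 1)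
    (by simp; exact_mod_cast hB1) zero_lt_one hr
  have hcast : ((B : ℝ) - 1) = ((B - 1 : ℕ) : ℝ) := by
    rw [Nat.cast_sub hB1]; norm_num
  refine h.congr_fun (fun t ht => ?_) measurableSet_Ioi
  beta_reduce
  rw [hcast, Real.rpow_natCast, Real.rpow_one]
  ring_nf

end Aux

/-- Integral representation of the joint moments of `η_i = Y_i / (Y_1 + ⋯ + Y_N)` for
i.i.d. positive integrable `Y_i`:
`E[η_1^{b_1} ⋯ η_a^{b_a}] = (1/Γ(b)) ∫_0^∞ u^{b-1} I_0(u)^{N-a} I_{b_1}(u) ⋯ I_{b_a}(u) du`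
where `I_p(u) = E[Y_1^p e^{-u Y_1}]`. -/
theorem stmt_1 {Ω : Type*} [MeasurableSpace Ω] (P : Measure Ω) [IsProbabilityMeasure P]
    (N a : ℕ) (hN : 0 < N) (ha : 0 < a) (haN : a ≤ N)
    (bv : Fin a → ℕ) (hmono : Antitone bv) (hb2 : ∀ j, 2 ≤ bv j)
    (B : ℕ) (hB : B = ∑ j, bv j)
    (Y : Fin N → Ω → ℝ) (hmeas : ∀ i, Measurable (Y i))
    (hindep : iIndepFun Y P)
    (hident : ∀ i, IdentDistrib (Y i) (Y ⟨0, hN⟩) P P)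
    (hpos : ∀ i, ∀ᵐ ω ∂P, 0 < Y i ω)
    (hint : Integrable (Y ⟨0, hN⟩) P) :
    ∫ ω, (∏ j : Fin a, (Y (Fin.castLE haN j) ω / ∑ i, Y i ω) ^ bv j) ∂P =
      (1 / Real.Gamma B) *
        ∫ u in Set.Ioi (0 : ℝ),
          u ^ (B - 1) * (∫ ω, Real.exp (-u * Y ⟨0, hN⟩ ω) ∂P) ^ (N - a) *
            ∏ j : Fin a, ∫ ω, (Y ⟨0, hN⟩ ω) ^ bv j * Real.exp (-u * Y ⟨0, hN⟩ ω) ∂P := by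
  classical
  set i0 : Fin N := ⟨0, hN⟩ with hi0
  set S : Ω → ℝ := fun ω => ∑ i, Y i ω with hS_def
  set Φ : Ω → ℝ := fun ω => ∏ j : Fin a, (Y (Fin.castLE haN j) ω) ^ bv j with hΦ_def
  have hSmeas : Measurable S := Finset.measurable_sum _ (fun i _ => hmeas i)
  have hΦmeas : Measurable Φ :=
    Finset.measurable_prod _ (fun j _ => (hmeas _).pow_const _)
  have hpos' : ∀ᵐ ω ∂P, ∀ i, 0 < Y i ω := (ae_all_iff).mpr hpos
  have hSpos : ∀ᵐ ω ∂P, 0 < S ω := by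
    filter_upwards [hpos'] with ω hω
    exact Finset.sum_pos (fun i _ => hω i) ⟨i0, mem_univ _⟩
  have hB1 : 1 ≤ B := by
    rw [hB]
    calc 1 ≤ bv ⟨0, ha⟩ := le_trans one_le_two (hb2 _)
    _ ≤ ∑ j, bv j := Finset.single_le_sum (fun j _ => Nat.zero_le _) (mem_univ _)
  have hBpos : (0:ℝ) < B := by exact_mod_cast hB1
  have hΓpos : 0 < Real.Gamma B := Real.Gamma_pos_of_pos hBpos
  -- the ratio identity and bound
  have hratio : ∀ᵐ ω ∂P, Φ ω * (1 / S ω) ^ B = ∏ j : Fin a, (Y (Fin.castLE haN j) ω / S ω) ^ bv j := by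
    filter_upwards [hpos', hSpos] with ω hω hS
    rw [hΦ_def]
    simp only
    rw [hB, ← Finset.prod_pow_eq_pow_sum, ← Finset.prod_mul_distrib]
    refine Finset.prod_congr rfl (fun j _ => ?_)
    rw [← mul_pow]
    congr 1
    field_simp
  have hratio_mem : ∀ᵐ ω ∂P, 0 ≤ Φ ω * (1 / S ω) ^ B ∧ Φ ω * (1 / S ω) ^ B ≤ 1 := by
    filter_upwards [hratio, hpos', hSpos] with ω hr hω hS
    rw [hr]
    constructor
    · exact Finset.prod_nonneg fun j _ => pow_nonneg (div_nonneg (hω _).le hS.le) _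
    · refine Finset.prod_le_one (fun j _ => pow_nonneg (div_nonneg (hω _).le hS.le) _)
        (fun j _ => pow_le_one₀ (div_nonneg (hω _).le hS.le) ?_)
      rw [div_le_one hS]
      exact Finset.single_le_sum (fun i _ => (hω i).le) (mem_univ _)
  -- Step 1: rewrite LHS as ∫ Φ / S^B
  have step1 : ∫ ω, (∏ j : Fin a, (Y (Fin.castLE haN j) ω / S ω) ^ bv j) ∂P
      = ∫ ω, Φ ω * (1 / S ω) ^ B ∂P :=
    (integral_congr_ae hratio).symm
  -- Step 2: pointwise Gamma representation
  have step2 : ∀ᵐ ω ∂P, Φ ω * (1 / S ω) ^ B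
      = (1 / Real.Gamma B) * ∫ u in Set.Ioi (0:ℝ), u ^ (B - 1) * (Φ ω * Real.exp (-u * S ω)) := by
    filter_upwards [hSpos] with ω hS
    have key := aux_key_integral hB1 hS
    have : (∫ u in Set.Ioi (0:ℝ), u ^ (B - 1) * (Φ ω * Real.exp (-u * S ω)))
        = Φ ω * ∫ u in Set.Ioi (0:ℝ), u ^ (B - 1) * Real.exp (-u * S ω) := by
      rw [← integral_const_mul]
      refine setIntegral_congr_fun measurableSet_Ioi (fun t _ => by ring)
    rw [this, key]
    field_simp
  -- the product measure integrand
  set f : Ω → ℝ → ℝ := fun ω u => u ^ (B - 1) * (Φ ω * Real.exp (-u * S ω)) with hf_def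
  have hfmeas : AEStronglyMeasurable (fun p : Ω × ℝ => f p.1 p.2)
      ((P.prod (volume.restrict (Set.Ioi 0)))) := by
    refine Measurable.aestronglyMeasurable ?_
    exact ((measurable_snd.pow_const _).mul
      ((hΦmeas.comp measurable_fst).mul
        ((measurable_snd.neg.mul (hSmeas.comp measurable_fst)).exp)))
  have hf_int : Integrable (fun p : Ω × ℝ => f p.1 p.2) (P.prod (volume.restrict (Set.Ioi 0))) := by
    rw [integrable_prod_iff hfmeas]
    constructor
    · filter_upwards [hSpos] with ω hS
      have base := aux_key_integrable hB1 hS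
      have := base.const_mul (Φ ω)
      exact this.congr (Filter.Eventually.of_forall (fun t => by simp only [hf_def]; ring))
    · have heq : ∀ᵐ ω ∂P, (∫ u in Set.Ioi (0:ℝ), ‖f ω u‖)
          = Real.Gamma B * (Φ ω * (1 / S ω) ^ B) := by
        filter_upwards [hSpos, hpos'] with ω hS hω
        have hΦpos : 0 ≤ Φ ω := Finset.prod_nonneg fun j _ => pow_nonneg (hω _).le _
        have : ∀ u ∈ Set.Ioi (0:ℝ), ‖f ω u‖ = f ω u := by
          intro u hu
          rw [Real.norm_eq_abs, abs_of_nonneg]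
          exact mul_nonneg (pow_nonneg (le_of_lt hu) _)
            (mul_nonneg hΦpos (Real.exp_pos _).le)
        rw [setIntegral_congr_fun measurableSet_Ioi this]
        have : (∫ u in Set.Ioi (0:ℝ), f ω u)
            = Φ ω * ∫ u in Set.Ioi (0:ℝ), u ^ (B - 1) * Real.exp (-u * S ω) := by
          rw [← integral_const_mul]
          exact setIntegral_congr_fun measurableSet_Ioi (fun t _ => by simp only [hf_def]; ring)
        rw [this, aux_key_integral hB1 hS]
        ring
      refine Integrable.mono' (integrable_const (Real.Gamma B)) ?_ ?_
      · exact hfmeas.norm.integral_prod_right'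
      · filter_upwards [heq, hratio_mem] with ω h1 h2
        rw [h1, Real.norm_eq_abs, abs_of_nonneg (mul_nonneg hΓpos.le h2.1)]
        calc Real.Gamma B * (Φ ω * (1 / S ω) ^ B) ≤ Real.Gamma B * 1 :=
          mul_le_mul_of_nonneg_left h2.2 hΓpos.le
        _ = Real.Gamma B := mul_one _
  -- Step 4: Fubini
  have step4 : ∫ ω, (∫ u in Set.Ioi (0:ℝ), f ω u) ∂P
      = ∫ u in Set.Ioi (0:ℝ), (∫ ω, f ω u ∂P) := integral_integral_swap hf_int
  -- Step 5: inner integral for fixed u > 0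
  have step5 : ∀ u : ℝ, u ∈ Set.Ioi (0:ℝ) →
      (∫ ω, Φ ω * Real.exp (-u * S ω) ∂P)
        = (∏ j : Fin a, ∫ ω, (Y i0 ω) ^ bv j * Real.exp (-u * Y i0 ω) ∂P) *
          (∫ ω, Real.exp (-u * Y i0 ω) ∂P) ^ (N - a) := by
    intro u hu
    set c : Fin N → ℕ := fun i => if h : (i : ℕ) < a then bv ⟨i, h⟩ else 0 with hc_def
    set g : Fin N → ℝ → ℝ := fun i y => y ^ c i * Real.exp (-u * y) with hg_def
    have hgmeas : ∀ i, Measurable (g i) := fun i =>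
      (measurable_id.pow_const _).mul ((measurable_id.const_mul (-u)).exp)
    have hpt : ∀ ω, Φ ω * Real.exp (-u * S ω) = ∏ i : Fin N, g i (Y i ω) := by
      intro ω
      have h1 : ∏ i : Fin N, g i (Y i ω)
          = (∏ i : Fin N, Y i ω ^ c i) * ∏ i : Fin N, Real.exp (-u * Y i ω) := by
        rw [← Finset.prod_mul_distrib]
      have h2 : ∏ i : Fin N, Real.exp (-u * Y i ω) = Real.exp (-u * S ω) := by
        rw [← Real.exp_sum, hS_def]
        simp only
        rw [Finset.mul_sum]
      have h3 : ∏ i : Fin N, Y i ω ^ c i = Φ ω := by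
        rw [aux_split haN (fun i => Y i ω ^ c i)]
        have hfilter : ∏ i ∈ univ.filter (fun i : Fin N => ¬ (i : ℕ) < a), Y i ω ^ c i = 1 := by
          refine Finset.prod_eq_one (fun i hi => ?_)
          simp only [mem_filter, mem_univ, true_and] at hi
          rw [hc_def]
          simp [hi]
        rw [hfilter, mul_one, hΦ_def]
        refine Finset.prod_congr rfl (fun j _ => ?_)
        congr 1
        rw [hc_def]
        simp only [Fin.coe_castLE, j.isLt, dif_pos]
      rw [h1, h2, h3]
    simp_rw [hpt]
    have hindep' : iIndepFun (fun i => g i ∘ Y i) P :=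
      hindep.comp g hgmeas
    have := aux_integral_prod hindep' (fun i => (hgmeas i).comp (hmeas i)) univ
    simp only [Function.comp_apply] at this
    rw [this]
    have hid : ∀ i, (∫ ω, g i (Y i ω) ∂P) = ∫ ω, g i (Y i0 ω) ∂P := fun i =>
      ((hident i).comp (hgmeas i)).integral_eq
    simp_rw [hid]
    rw [aux_split haN (fun i => ∫ ω, g i (Y i0 ω) ∂P)]
    congr 1
    · refine Finset.prod_congr rfl (fun j _ => ?_)
      refine integral_congr_ae (Filter.Eventually.of_forall (fun ω => ?_))
      rw [hg_def]
      simp only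
      congr 2
      rw [hc_def]
      simp only [Fin.coe_castLE, j.isLt, dif_pos]
    · have hone : ∀ i ∈ univ.filter (fun i : Fin N => ¬ (i : ℕ) < a),
          (∫ ω, g i (Y i0 ω) ∂P) = ∫ ω, Real.exp (-u * Y i0 ω) ∂P := by
        intro i hi
        simp only [mem_filter, mem_univ, true_and] at hi
        refine integral_congr_ae (Filter.Eventually.of_forall (fun ω => ?_))
        rw [hg_def, hc_def]
        simp [hi]
      rw [Finset.prod_congr rfl hone, Finset.prod_const, aux_card haN]
  -- put it all together
  calc ∫ ω, (∏ j : Fin a, (Y (Fin.castLE haN j) ω / S ω) ^ bv j) ∂P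
      = ∫ ω, Φ ω * (1 / S ω) ^ B ∂P := step1
    _ = ∫ ω, ((1 / Real.Gamma B) * ∫ u in Set.Ioi (0:ℝ), f ω u) ∂P := integral_congr_ae step2
    _ = (1 / Real.Gamma B) * ∫ ω, (∫ u in Set.Ioi (0:ℝ), f ω u) ∂P := integral_const_mul _ _
    _ = (1 / Real.Gamma B) * ∫ u in Set.Ioi (0:ℝ),
          u ^ (B - 1) * (∫ ω, Real.exp (-u * Y i0 ω) ∂P) ^ (N - a) *
            ∏ j : Fin a, ∫ ω, (Y i0 ω) ^ bv j * Real.exp (-u * Y i0 ω) ∂P := by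
        rw [step4]
        congr 1
        refine setIntegral_congr_fun measurableSet_Ioi (fun u hu => ?_)
        have : ∫ ω, f ω u ∂P = u ^ (B - 1) * ∫ ω, Φ ω * Real.exp (-u * S ω) ∂P :=
          integral_const_mul _ _
        rw [this, step5 u hu]
        ring
end

section
/- Let Y_1, Y_2, ... be i.i.d. strictly positive random variables with E[Y_1^2] < ∞, and for each N let η_1^{(N)} = Y_1 / (Y_1 + ... + Y_N). Then lim_{N→∞} N^2 · E[(η_1^{(N)})^2] = E[Y_1^2] / (E[Y_1])^2. -/
open MeasureTheory ProbabilityTheory Filter Finset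

set_option maxHeartbeats 1000000

private lemma exp_neg_le_quad {x : ℝ} (hx : 0 ≤ x) : Real.exp (-x) ≤ 1 - x + x ^ 2 := by
  have h1 : 1 + x ≤ Real.exp x := by have := Real.add_one_le_exp x; linarith
  have h2 : (0:ℝ) < 1 + x := by linarith
  have h3 : Real.exp (-x) ≤ (1 + x)⁻¹ := by
    rw [Real.exp_neg]
    exact inv_anti₀ h2 h1
  have h4 : (1 + x)⁻¹ ≤ 1 - x + x ^ 2 := by
    rw [inv_eq_one_div, div_le_iff₀ h2]
    nlinarith
  linarith

/-- If `Y_1, Y_2, …` are i.i.d. positive square-integrable and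
`η_1^{(N)} = Y_1 / (Y_1 + ⋯ + Y_N)`, then `N² E[(η_1^{(N)})²] → E[Y_1²]/E[Y_1]²`. -/
theorem stmt_8 {Ω : Type*} [MeasurableSpace Ω] (P : Measure Ω) [IsProbabilityMeasure P]
    (Y : ℕ → Ω → ℝ) (hmeas : ∀ i, Measurable (Y i))
    (hindep : iIndepFun Y P)
    (hident : ∀ i, IdentDistrib (Y i) (Y 0) P P)
    (hpos : ∀ i, ∀ᵐ ω ∂P, 0 < Y i ω)
    (hsq : Integrable (fun ω => (Y 0 ω) ^ 2) P) :
    Tendsto (fun N : ℕ =>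
        (N : ℝ) ^ 2 * ∫ ω, (Y 0 ω / ∑ j ∈ Finset.range N, Y j ω) ^ 2 ∂P)
      atTop
      (nhds ((∫ ω, (Y 0 ω) ^ 2 ∂P) / (∫ ω, Y 0 ω ∂P) ^ 2)) := by
  -- notation
  set S : ℕ → Ω → ℝ := fun N ω => ∑ j ∈ Finset.range N, Y j ω with hS
  have hSmeas : ∀ N, Measurable (S N) := fun N =>
    Finset.measurable_sum _ (fun j _ => hmeas j)
  set μ : ℝ := ∫ ω, Y 0 ω ∂P with hμdef
  set m2 : ℝ := ∫ ω, (Y 0 ω) ^ 2 ∂P with hm2def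
  -- integrability of Y 0
  have hint0 : Integrable (Y 0) P := by
    have hI : Integrable (fun ω => 1 + (Y 0 ω) ^ 2) P := (integrable_const (1:ℝ)).add hsq
    refine hI.mono' (hmeas 0).aestronglyMeasurable ?_
    filter_upwards with ω
    rw [Real.norm_eq_abs]
    nlinarith [sq_nonneg (|Y 0 ω| - 1), sq_abs (Y 0 ω)]
  -- a.e. positivity of all Y's simultaneously
  have hSpos : ∀ᵐ ω ∂P, ∀ j, 0 < Y j ω := ae_all_iff.mpr hpos
  -- positivity of the moments
  have hμpos : 0 < μ := by
    rw [hμdef, integral_pos_iff_support_of_nonneg_ae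
      ((hpos 0).mono fun ω h => le_of_lt h) hint0]
    have hms : MeasurableSet (Function.support (Y 0)) :=
      (hmeas 0) (measurableSet_singleton 0).compl
    have h0 : P (Function.support (Y 0))ᶜ = 0 := by
      refine measure_mono_null ?_ ((ae_iff.mp (hpos 0)))
      intro ω hω
      simp only [Set.mem_compl_iff, Function.mem_support, not_not] at hω
      simp [hω]
    rw [prob_compl_eq_zero_iff hms] at h0
    rw [h0]; norm_num
  have hm2pos : 0 < m2 := by
    rw [hm2def, integral_pos_iff_support_of_nonneg_ae
      (Eventually.of_forall fun ω => sq_nonneg _) hsq]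
    have hms : MeasurableSet (Function.support fun ω => (Y 0 ω) ^ 2) :=
      ((hmeas 0).pow_const 2) (measurableSet_singleton 0).compl
    have h0 : P (Function.support fun ω => (Y 0 ω) ^ 2)ᶜ = 0 := by
      refine measure_mono_null ?_ ((ae_iff.mp (hpos 0)))
      intro ω hω
      simp only [Set.mem_compl_iff, Function.mem_support, not_not] at hω
      have : Y 0 ω = 0 := by
        have := sq_eq_zero_iff.mp hω
        exact this
      simp [this]
    rw [prob_compl_eq_zero_iff hms] at h0
    rw [h0]; norm_num
  -- constants
  set a : ℝ := μ / 2 with hadef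
  have hapos : 0 < a := by positivity
  set t : ℝ := μ / (4 * m2) with htdef
  have htpos : 0 < t := by positivity
  set ρ : ℝ := Real.exp (-(t * μ) / 4) with hρdef
  have hρnn : 0 ≤ ρ := (Real.exp_pos _).le
  have hρlt : ρ < 1 := by
    rw [hρdef, Real.exp_lt_one_iff]
    have : 0 < t * μ := by positivity
    linarith
  -- integrability of exponentials
  have hbd : ∀ (X : Ω → ℝ), Measurable X → (∀ᵐ ω ∂P, 0 ≤ X ω) →
      Integrable (fun ω => Real.exp (-t * X ω)) P := by
    intro X hX hX0
    refine (integrable_const (1:ℝ)).mono'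
      ((hX.const_mul (-t)).exp.aestronglyMeasurable) ?_
    filter_upwards [hX0] with ω h0
    rw [Real.norm_eq_abs, abs_of_pos (Real.exp_pos _), Real.exp_le_one_iff]
    nlinarith
  -- the mgf of Y 0 at -t
  set φ : ℝ := mgf (Y 0) P (-t) with hφdef
  have hφnn : 0 ≤ φ := mgf_nonneg
  have hφle : φ ≤ Real.exp (-t * μ + t ^ 2 * m2) := by
    have hI1 : Integrable (fun ω => 1 - t * Y 0 ω) P :=
      (integrable_const (1:ℝ)).sub (hint0.const_mul t)
    have hI2 : Integrable (fun ω => t ^ 2 * (Y 0 ω) ^ 2) P := hsq.const_mul (t ^ 2)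
    have hI12 : Integrable (fun ω => 1 - t * Y 0 ω + t ^ 2 * (Y 0 ω) ^ 2) P := hI1.add hI2
    have hstep1 : φ ≤ ∫ ω, (1 - t * Y 0 ω + t ^ 2 * (Y 0 ω) ^ 2) ∂P := by
      rw [hφdef, mgf]
      refine integral_mono_ae (hbd (Y 0) (hmeas 0) ((hpos 0).mono fun ω h => h.le))
        hI12 ?_
      filter_upwards [hpos 0] with ω hω
      have h := exp_neg_le_quad (x := t * Y 0 ω) (by positivity)
      calc Real.exp (-t * Y 0 ω) = Real.exp (-(t * Y 0 ω)) := by ring_nf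
        _ ≤ 1 - t * Y 0 ω + (t * Y 0 ω) ^ 2 := h
        _ = 1 - t * Y 0 ω + t ^ 2 * (Y 0 ω) ^ 2 := by ring
    have hstep2 : ∫ ω, (1 - t * Y 0 ω + t ^ 2 * (Y 0 ω) ^ 2) ∂P
        = 1 - t * μ + t ^ 2 * m2 := by
      rw [integral_add hI1 hI2, integral_sub (integrable_const (1:ℝ))
        (hint0.const_mul t), integral_const, integral_const_mul, integral_const_mul]
      simp [hμdef, hm2def]
    have hstep3 : 1 - t * μ + t ^ 2 * m2 ≤ Real.exp (-t * μ + t ^ 2 * m2) := by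
      have := Real.add_one_le_exp (-t * μ + t ^ 2 * m2)
      linarith
    linarith
  -- Chernoff bound
  have hcher : ∀ N : ℕ, (P {ω | S N ω ≤ a * N}).toReal ≤ ρ ^ N := by
    intro N
    have hSnn : ∀ᵐ ω ∂P, 0 ≤ S N ω := by
      filter_upwards [hSpos] with ω hω
      exact Finset.sum_nonneg fun j _ => (hω j).le
    have hintS : Integrable (fun ω => Real.exp (-t * S N ω)) P :=
      hbd (S N) (hSmeas N) hSnn
    have h1 := measure_le_le_exp_mul_mgf (X := S N) (μ := P) (t := -t)
      (a * N) (by linarith) hintS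
    have h2 : mgf (S N) P (-t) = φ ^ N := by
      have hsum : S N = ∑ j ∈ Finset.range N, Y j := by
        funext ω; simp [hS]
      rw [hsum, hindep.mgf_sum hmeas (Finset.range N)]
      have : ∀ j ∈ Finset.range N, mgf (Y j) P (-t) = φ := by
        intro j _
        rw [hφdef, mgf, mgf]
        have hm : Measurable fun x : ℝ => Real.exp (-t * x) :=
          Real.measurable_exp.comp (measurable_const_mul (-t))
        exact ((hident j).comp hm).integral_eq
      rw [Finset.prod_congr rfl this, Finset.prod_const, Finset.card_range]
    rw [h2] at h1
    calc (P {ω | S N ω ≤ a * N}).toReal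
        ≤ Real.exp (-(-t) * (a * N)) * φ ^ N := h1
      _ = Real.exp (t * a) ^ N * φ ^ N := by
          rw [← Real.exp_nat_mul]; congr 1; ring
      _ ≤ Real.exp (t * a) ^ N * Real.exp (-t * μ + t ^ 2 * m2) ^ N := by
          gcongr
      _ = (Real.exp (t * a) * Real.exp (-t * μ + t ^ 2 * m2)) ^ N := by
          rw [mul_pow]
      _ = ρ ^ N := by
          rw [← Real.exp_add, hρdef]
          congr 1
          rw [htdef, hadef]
          field_simp
          ring
  -- the functions
  set F : ℕ → Ω → ℝ := fun N ω => (N : ℝ) ^ 2 * (Y 0 ω / S N ω) ^ 2 with hFdef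
  have hFmeas : ∀ N, Measurable (F N) := fun N =>
    (measurable_const.mul (((hmeas 0).div (hSmeas N)).pow_const 2))
  have hFnn : ∀ N ω, 0 ≤ F N ω := fun N ω => by positivity
  set A : ℕ → Set Ω := fun N => {ω | a * N ≤ S N ω} with hAdef
  have hAms : ∀ N, MeasurableSet (A N) := fun N =>
    measurableSet_le measurable_const (hSmeas N)
  set f : ℕ → Ω → ℝ := fun N => (A N).indicator (F N) with hfdef
  set g : ℕ → Ω → ℝ := fun N => (A N)ᶜ.indicator (F N) with hgdef
  have hfg : ∀ N, f N + g N = F N := fun N => Set.indicator_self_add_compl (A N) (F N)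
  -- bound for f
  have h_bound : ∀ N, ∀ᵐ ω ∂P, ‖f N ω‖ ≤ (Y 0 ω) ^ 2 / a ^ 2 := by
    intro N
    filter_upwards [hSpos] with ω hω
    by_cases hmem : ω ∈ A N
    · rw [hfdef]
      simp only [Set.indicator_of_mem hmem]
      rw [Real.norm_eq_abs, abs_of_nonneg (hFnn N ω)]
      rcases Nat.eq_zero_or_pos N with hN | hN
      · subst hN; simp [hFdef]; positivity
      · have hmem' : a * N ≤ S N ω := hmem
        have haN : 0 < a * N := by
          have : (0:ℝ) < N := by exact_mod_cast hN
          positivity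
        have hSp : 0 < S N ω := lt_of_lt_of_le haN hmem'
        have hY0 : 0 < Y 0 ω := hω 0
        rw [hFdef]
        simp only
        rw [div_pow, mul_div_assoc' ((N:ℝ)^2), div_le_div_iff₀ (by positivity) (by positivity)]
        have h1 : (a * N) * (a * N) ≤ S N ω * S N ω :=
          mul_self_le_mul_self haN.le hmem'
        nlinarith [sq_nonneg (Y 0 ω), sq_nonneg (S N ω)]
    · rw [hfdef]
      simp only [Set.indicator_of_notMem hmem]
      rw [norm_zero]
      positivity
  have hbound_int : Integrable (fun ω => (Y 0 ω) ^ 2 / a ^ 2) P := hsq.div_const _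
  have hf_meas : ∀ N, AEStronglyMeasurable (f N) P := fun N =>
    ((hFmeas N).indicator (hAms N)).aestronglyMeasurable
  have hfint : ∀ N, Integrable (f N) P := fun N =>
    hbound_int.mono' (hf_meas N) (h_bound N)
  -- integrability of F
  have hFint : ∀ N, Integrable (F N) P := by
    intro N
    refine (integrable_const ((N:ℝ) ^ 2)).mono' (hFmeas N).aestronglyMeasurable ?_
    filter_upwards [hSpos] with ω hω
    rw [Real.norm_eq_abs, abs_of_nonneg (hFnn N ω)]
    rcases Nat.eq_zero_or_pos N with hN | hN
    · subst hN; simp [hFdef]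
    · have hY0 : 0 < Y 0 ω := hω 0
      have hle : Y 0 ω ≤ S N ω := by
        refine Finset.single_le_sum (fun i _ => (hω i).le) ?_
        exact Finset.mem_range.mpr hN
      have hSp : 0 < S N ω := lt_of_lt_of_le hY0 hle
      have hratio : (Y 0 ω / S N ω) ^ 2 ≤ 1 := by
        rw [div_pow, div_le_one (by positivity)]
        nlinarith
      calc F N ω = (N:ℝ) ^ 2 * (Y 0 ω / S N ω) ^ 2 := rfl
        _ ≤ (N:ℝ) ^ 2 * 1 := by
            have : (0:ℝ) ≤ (N:ℝ)^2 := by positivity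
            nlinarith
        _ = (N:ℝ) ^ 2 := by ring
  have hgint : ∀ N, Integrable (g N) P := by
    intro N
    have : g N = F N - f N := eq_sub_of_add_eq' (hfg N)
    rw [this]
    exact (hFint N).sub (hfint N)
  -- split of the integral
  have h_split : ∀ N, ∫ ω, F N ω ∂P = (∫ ω, f N ω ∂P) + ∫ ω, g N ω ∂P := by
    intro N
    rw [← integral_add (hfint N) (hgint N)]
    congr 1
    funext ω
    rw [← hfg N]
    rfl
  -- SLLN
  have hslln : ∀ᵐ ω ∂P,
      Tendsto (fun n : ℕ => ((n : ℝ))⁻¹ * S n ω) atTop (nhds μ) := by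
    have := strong_law_ae Y hint0 (fun i j hij => hindep.indepFun hij) hident
    filter_upwards [this] with ω hω
    simpa [hS, smul_eq_mul] using hω
  -- limit of ∫ f N
  have hf_tendsto : Tendsto (fun N => ∫ ω, f N ω ∂P) atTop
      (nhds (m2 / μ ^ 2)) := by
    have hlim : ∀ᵐ ω ∂P,
        Tendsto (fun N => f N ω) atTop (nhds ((Y 0 ω) ^ 2 / μ ^ 2)) := by
      filter_upwards [hSpos, hslln] with ω hωpos hωt
      have hY0 : 0 < Y 0 ω := hωpos 0
      have hinv : Tendsto (fun N : ℕ => (((N : ℝ))⁻¹ * S N ω)⁻¹) atTop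
          (nhds μ⁻¹) := hωt.inv₀ (ne_of_gt hμpos)
      have hmain : Tendsto (fun N : ℕ => (Y 0 ω) ^ 2 * ((((N : ℝ))⁻¹ * S N ω)⁻¹) ^ 2)
          atTop (nhds ((Y 0 ω) ^ 2 / μ ^ 2)) := by
        have := (hinv.pow 2).const_mul ((Y 0 ω) ^ 2)
        convert this using 2
        rw [inv_pow, div_eq_mul_inv]
      refine hmain.congr' ?_
      have hev1 : ∀ᶠ N : ℕ in atTop, a < ((N : ℝ))⁻¹ * S N ω :=
        hωt.eventually (eventually_gt_nhds (by rw [hadef]; linarith))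
      filter_upwards [hev1, eventually_ge_atTop 1] with N hN1 hN2
      have hNpos : (0:ℝ) < N := by exact_mod_cast hN2
      have hSgt : a * N < S N ω := by
        have h := mul_lt_mul_of_pos_right hN1 hNpos
        calc a * N < ((N:ℝ))⁻¹ * S N ω * N := h
          _ = S N ω := by field_simp
      have hmem : ω ∈ A N := le_of_lt hSgt
      have hSp : 0 < S N ω := lt_of_le_of_lt (by positivity) hSgt
      rw [hfdef]
      simp only [Set.indicator_of_mem hmem, hFdef]
      field_simp
    have hDCT := tendsto_integral_of_dominated_convergence
      (fun ω => (Y 0 ω) ^ 2 / a ^ 2) hf_meas hbound_int h_bound hlim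
    rw [integral_div] at hDCT
    rw [hm2def]
    exact hDCT
  -- limit of ∫ g N
  have hg_tendsto : Tendsto (fun N => ∫ ω, g N ω ∂P) atTop (nhds 0) := by
    have hup : ∀ᶠ N : ℕ in atTop, ∫ ω, g N ω ∂P ≤ (N:ℝ) ^ 2 * ρ ^ N := by
      filter_upwards [eventually_ge_atTop 1] with N hN
      have step1 : ∫ ω, g N ω ∂P ≤
          ∫ ω, (A N)ᶜ.indicator (fun _ => (N:ℝ) ^ 2) ω ∂P := by
        refine integral_mono_ae (hgint N)
          ((integrable_const _).indicator (hAms N).compl) ?_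
        filter_upwards [hSpos] with ω hω
        by_cases hmem : ω ∈ (A N)ᶜ
        · rw [hgdef]
          simp only [Set.indicator_of_mem hmem]
          have hY0 : 0 < Y 0 ω := hω 0
          have hle : Y 0 ω ≤ S N ω := by
            refine Finset.single_le_sum (fun i _ => (hω i).le) ?_
            exact Finset.mem_range.mpr hN
          have hSp : 0 < S N ω := lt_of_lt_of_le hY0 hle
          have hratio : (Y 0 ω / S N ω) ^ 2 ≤ 1 := by
            rw [div_pow, div_le_one (by positivity)]
            nlinarith
          calc F N ω = (N:ℝ) ^ 2 * (Y 0 ω / S N ω) ^ 2 := rfl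
            _ ≤ (N:ℝ) ^ 2 * 1 := by
                have : (0:ℝ) ≤ (N:ℝ)^2 := by positivity
                nlinarith
            _ = (N:ℝ) ^ 2 := by ring
        · rw [hgdef]
          simp [Set.indicator_of_notMem hmem]
      have step2 : ∫ ω, (A N)ᶜ.indicator (fun _ => (N:ℝ) ^ 2) ω ∂P
          = (P (A N)ᶜ).toReal * (N:ℝ) ^ 2 := by
        rw [integral_indicator_const _ (hAms N).compl, smul_eq_mul]
        rfl
      have step3 : (P (A N)ᶜ).toReal ≤ ρ ^ N := by
        refine le_trans ?_ (hcher N)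
        refine ENNReal.toReal_mono (measure_ne_top P _) (measure_mono ?_)
        intro ω hω
        simp only [hAdef, Set.mem_compl_iff, Set.mem_setOf_eq, not_le] at hω
        exact le_of_lt hω
      calc ∫ ω, g N ω ∂P ≤ (P (A N)ᶜ).toReal * (N:ℝ) ^ 2 := by
            rw [← step2]; exact step1
        _ ≤ ρ ^ N * (N:ℝ) ^ 2 := by
            have : (0:ℝ) ≤ (N:ℝ) ^ 2 := by positivity
            exact mul_le_mul_of_nonneg_right step3 this
        _ = (N:ℝ) ^ 2 * ρ ^ N := by ring
    have hlow : ∀ᶠ N : ℕ in atTop, 0 ≤ ∫ ω, g N ω ∂P := by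
      filter_upwards with N
      exact integral_nonneg fun ω => Set.indicator_nonneg (fun _ _ => hFnn N _) ω
    exact squeeze_zero' hlow hup (tendsto_pow_const_mul_const_pow_of_lt_one 2 hρnn hρlt)
  -- conclusion
  have hsum : Tendsto (fun N => (∫ ω, f N ω ∂P) + ∫ ω, g N ω ∂P) atTop
      (nhds (m2 / μ ^ 2 + 0)) := hf_tendsto.add hg_tendsto
  rw [add_zero] at hsum
  have heq : (fun N : ℕ => (N : ℝ) ^ 2 * ∫ ω, (Y 0 ω / ∑ j ∈ Finset.range N, Y j ω) ^ 2 ∂P)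
      = fun N => (∫ ω, f N ω ∂P) + ∫ ω, g N ω ∂P := by
    funext N
    rw [← h_split N]
    exact (integral_const_mul _ _).symm
  rw [heq]
  exact hsum
end

section
/- Let Y_1, Y_2, ... be i.i.d. strictly positive random variables with E[Y_1^2] < ∞, and for each N let η_1^{(N)} = Y_1 / (Y_1 + ... + Y_N). Then lim_{N→∞} N^2 · E[(η_1^{(N)})^3] = 0. -/
open MeasureTheory ProbabilityTheory Filter Finset

set_option maxHeartbeats 1000000 in
/-- If `Y_1, Y_2, …` are i.i.d. positive with finite second moment and
`η_1^{(N)} = Y_1 / (Y_1 + ⋯ + Y_N)`, then `N² E[(η_1^{(N)})³] → 0`. -/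
theorem stmt_9 {Ω : Type*} [MeasurableSpace Ω] (P : Measure Ω) [IsProbabilityMeasure P]
    (Y : ℕ → Ω → ℝ) (hmeas : ∀ i, Measurable (Y i))
    (hindep : iIndepFun Y P)
    (hident : ∀ i, IdentDistrib (Y i) (Y 0) P P)
    (hpos : ∀ i, ∀ᵐ ω ∂P, 0 < Y i ω)
    (hsq : Integrable (fun ω => (Y 0 ω) ^ 2) P) :
    Tendsto (fun N : ℕ =>
        (N : ℝ) ^ 2 * ∫ ω, (Y 0 ω / ∑ j ∈ Finset.range N, Y j ω) ^ 3 ∂P)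
      atTop (nhds 0) := by
  classical
  have hae : ∀ᵐ ω ∂P, ∀ i, 0 < Y i ω := ae_all_iff.mpr hpos
  -- measurability of partial sums
  have hS : ∀ N : ℕ, Measurable (fun ω => ∑ j ∈ Finset.range N, Y j ω) :=
    fun N => Finset.measurable_sum _ (fun i _ => hmeas i)
  have hT : ∀ N : ℕ, Measurable (fun ω => ∑ j ∈ Finset.Ico 1 N, Y j ω) :=
    fun N => Finset.measurable_sum _ (fun i _ => hmeas i)
  -- exp(-Y i) is integrable
  have hexp : ∀ i, Integrable (fun ω => Real.exp (-1 * Y i ω)) P := by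
    intro i
    refine (integrable_const (1:ℝ)).mono'
      ((hmeas i).const_mul (-1)).exp.aestronglyMeasurable ?_
    filter_upwards [hpos i] with ω hω
    rw [Real.norm_eq_abs, abs_of_pos (Real.exp_pos _)]
    rw [Real.exp_le_one_iff]; nlinarith
  obtain ⟨r, hr_def⟩ : ∃ r : ℝ, r = mgf (Y 0) P (-1) := ⟨_, rfl⟩
  have hr0 : 0 < r := hr_def ▸ mgf_pos (hexp 0)
  -- r < 1
  have hone : P {ω | 0 < Y 0 ω} = 1 := by
    rw [← prob_compl_eq_zero_iff (measurableSet_lt measurable_const (hmeas 0))]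
    have h := hpos 0
    rw [ae_iff] at h
    rw [Set.compl_setOf]
    simpa using h
  have hr1 : r < 1 := by
    have hint1 : Integrable (fun ω => 1 - Real.exp (-1 * Y 0 ω)) P :=
      ((integrable_const (1:ℝ)).sub (hexp 0)).congr
        (by filter_upwards with ω; simp)
    have h2 : 0 < ∫ ω, (1 - Real.exp (-1 * Y 0 ω)) ∂P := by
      rw [integral_pos_iff_support_of_nonneg_ae ?_ hint1]
      · refine lt_of_lt_of_le (b := P {ω | 0 < Y 0 ω}) ?_ (measure_mono ?_)
        · rw [hone]; exact zero_lt_one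
        · intro ω hω
          simp only [Set.mem_setOf_eq] at hω
          simp only [Function.mem_support]
          have : Real.exp (-1 * Y 0 ω) < 1 := by
            rw [Real.exp_lt_one_iff]; nlinarith
          intro hcontra
          nlinarith
      · filter_upwards [hpos 0] with ω hω
        have : Real.exp (-1 * Y 0 ω) ≤ 1 := by rw [Real.exp_le_one_iff]; nlinarith
        simp only [Pi.zero_apply]; linarith
    rw [integral_sub (integrable_const 1) (hexp 0)] at h2
    simp only [integral_const, probReal_univ, smul_eq_mul, mul_one] at h2
    have : ∫ ω, Real.exp (-1 * Y 0 ω) ∂P = r := by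
      rw [hr_def, mgf]
    linarith
  obtain ⟨c, hc_def⟩ : ∃ c : ℝ, c = -Real.log r / 2 := ⟨_, rfl⟩
  have hlogneg : Real.log r < 0 := Real.log_neg hr0 hr1
  have hc : 0 < c := by rw [hc_def]; linarith
  obtain ⟨ρ, hρ_def⟩ : ∃ ρ : ℝ, ρ = Real.exp c * r := ⟨_, rfl⟩
  have hρ0 : 0 ≤ ρ := by rw [hρ_def]; positivity
  have hρ1 : ρ < 1 := by
    have h1 : c < -Real.log r := by rw [hc_def]; linarith
    have h2 : Real.exp c < Real.exp (-Real.log r) := Real.exp_lt_exp.mpr h1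
    have h3 : Real.exp (-Real.log r) = r⁻¹ := by
      rw [Real.exp_neg, Real.exp_log hr0]
    rw [hρ_def]
    calc Real.exp c * r < r⁻¹ * r := by
          apply mul_lt_mul_of_pos_right _ hr0
          rw [← h3]; exact h2
      _ = 1 := inv_mul_cancel₀ hr0.ne'
  -- all mgf's at -1 equal r
  have hmgf : ∀ j, mgf (Y j) P (-1) = r := by
    intro j
    rw [hr_def]
    have hu : Measurable fun x : ℝ => Real.exp (-1 * x) :=
      (measurable_id.const_mul (-1)).exp
    have := ((hident j).comp hu).integral_eq
    simpa [mgf, Function.comp] using this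
  -- Chernoff tail bound
  have htail : ∀ N : ℕ, 1 ≤ N →
      (P {ω | ∑ j ∈ Finset.Ico 1 N, Y j ω ≤ c * N}).toReal ≤ ρ ^ N / r := by
    intro N hN
    have hint : Integrable (fun ω => Real.exp (-1 * (∑ j ∈ Finset.Ico 1 N, Y j) ω)) P := by
      refine (integrable_const (1:ℝ)).mono'
        (((hT N).const_mul (-1)).exp.aestronglyMeasurable.congr ?_) ?_
      · filter_upwards with ω
        simp [Finset.sum_apply]
      · filter_upwards [hae] with ω hω
        rw [Real.norm_eq_abs, abs_of_pos (Real.exp_pos _), Real.exp_le_one_iff]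
        have : 0 ≤ ∑ j ∈ Finset.Ico 1 N, Y j ω :=
          Finset.sum_nonneg fun i _ => (hω i).le
        simp only [Finset.sum_apply]
        nlinarith
    have key := measure_le_le_exp_mul_mgf (μ := P) (X := ∑ j ∈ Finset.Ico 1 N, Y j)
      (ε := c * N) (t := -1) (by norm_num) hint
    have hmg : mgf (∑ j ∈ Finset.Ico 1 N, Y j) P (-1) = r ^ (N - 1) := by
      rw [hindep.mgf_sum hmeas (Finset.Ico 1 N)]
      rw [Finset.prod_congr rfl fun j _ => hmgf j]
      simp [Nat.card_Ico]
    have hset : {ω | (∑ j ∈ Finset.Ico 1 N, Y j) ω ≤ c * N}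
        = {ω | ∑ j ∈ Finset.Ico 1 N, Y j ω ≤ c * N} := by
      ext ω; simp [Finset.sum_apply]
    rw [hmg, hset] at key
    refine key.trans ?_
    have hpow : r ^ (N - 1) = r ^ N / r := by
      rw [eq_div_iff hr0.ne', ← pow_succ, Nat.sub_add_cancel hN]
    rw [hpow]
    have hexpc : Real.exp (-(-1) * (c * N)) = Real.exp c ^ N := by
      rw [← Real.exp_nat_mul]
      ring_nf
    rw [hexpc, hρ_def, mul_pow]
    rw [mul_div_assoc]
  -- a.e. bounds on η
  have heta : ∀ N : ℕ, 1 ≤ N → ∀ ω, (∀ i, 0 < Y i ω) →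
      0 ≤ Y 0 ω / ∑ j ∈ Finset.range N, Y j ω ∧
      Y 0 ω / ∑ j ∈ Finset.range N, Y j ω ≤ 1 := by
    intro N hN ω hω
    have hSpos : 0 < ∑ j ∈ Finset.range N, Y j ω :=
      Finset.sum_pos (fun i _ => hω i) ⟨0, Finset.mem_range.mpr hN⟩
    refine ⟨div_nonneg (hω 0).le hSpos.le, ?_⟩
    rw [div_le_one hSpos]
    exact Finset.single_le_sum (fun i _ => (hω i).le) (Finset.mem_range.mpr hN)
  -- integrability of η³
  have hint_eta : ∀ N : ℕ, 1 ≤ N →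
      Integrable (fun ω => (Y 0 ω / ∑ j ∈ Finset.range N, Y j ω) ^ 3) P := by
    intro N hN
    refine (integrable_const (1:ℝ)).mono'
      (((hmeas 0).div (hS N)).pow_const 3).aestronglyMeasurable ?_
    filter_upwards [hae] with ω hω
    obtain ⟨h1, h2⟩ := heta N hN ω hω
    rw [Real.norm_eq_abs, abs_pow, abs_of_nonneg h1]
    exact pow_le_one₀ h1 h2
  -- integrability of the min term
  have hint_min : ∀ N : ℕ,
      Integrable (fun ω => (min 1 (Y 0 ω / (c * N))) ^ 3) P := by
    intro N
    refine (integrable_const (1:ℝ)).mono'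
      ((measurable_const.min ((hmeas 0).div_const _)).pow_const 3).aestronglyMeasurable ?_
    filter_upwards [hpos 0] with ω hω
    have h0 : 0 ≤ min 1 (Y 0 ω / (c * N)) := by
      rcases Nat.eq_zero_or_pos N with h | h
      · simp [h]
      · have : (0:ℝ) < c * N := by positivity
        exact le_min zero_le_one (div_nonneg hω.le this.le)
    have h1 : min 1 (Y 0 ω / (c * N)) ≤ 1 := min_le_left _ _
    rw [Real.norm_eq_abs, abs_pow, abs_of_nonneg h0]
    exact pow_le_one₀ h0 h1
  -- main pointwise bound, integrated
  have hmain : ∀ N : ℕ, 1 ≤ N →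
      (∫ ω, (Y 0 ω / ∑ j ∈ Finset.range N, Y j ω) ^ 3 ∂P) ≤
      (∫ ω, (min 1 (Y 0 ω / (c * N))) ^ 3 ∂P)
        + (P {ω | ∑ j ∈ Finset.Ico 1 N, Y j ω ≤ c * N}).toReal := by
    intro N hN
    have hsetm : MeasurableSet {ω | ∑ j ∈ Finset.Ico 1 N, Y j ω ≤ c * N} :=
      measurableSet_le (hT N) measurable_const
    have hindint : Integrable
        ({ω | ∑ j ∈ Finset.Ico 1 N, Y j ω ≤ c * N}.indicator fun _ => (1:ℝ)) P :=
      (integrable_const 1).indicator hsetm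
    have hle : (∫ ω, (Y 0 ω / ∑ j ∈ Finset.range N, Y j ω) ^ 3 ∂P) ≤
        ∫ ω, ((min 1 (Y 0 ω / (c * N))) ^ 3
          + {ω | ∑ j ∈ Finset.Ico 1 N, Y j ω ≤ c * N}.indicator (fun _ => (1:ℝ)) ω) ∂P := by
      refine integral_mono_ae (hint_eta N hN) ((hint_min N).add hindint) ?_
      filter_upwards [hae] with ω hω
      obtain ⟨h1, h2⟩ := heta N hN ω hω
      have hcN : (0:ℝ) < c * N := by
        have : (1:ℝ) ≤ N := by exact_mod_cast hN
        positivity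
      have hmin0 : 0 ≤ min 1 (Y 0 ω / (c * N)) :=
        le_min zero_le_one (div_nonneg (hω 0).le hcN.le)
      have hsplit : ∑ j ∈ Finset.range N, Y j ω
          = Y 0 ω + ∑ j ∈ Finset.Ico 1 N, Y j ω := by
        rw [Finset.range_eq_Ico, Finset.sum_eq_sum_Ico_succ_bot hN]
      by_cases hTc : ∑ j ∈ Finset.Ico 1 N, Y j ω ≤ c * N
      · have hind : {ω | ∑ j ∈ Finset.Ico 1 N, Y j ω ≤ c * N}.indicator
            (fun _ => (1:ℝ)) ω = 1 :=
          Set.indicator_of_mem (show ω ∈ {ω | ∑ j ∈ Finset.Ico 1 N, Y j ω ≤ c * N} from hTc) _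
        rw [hind]
        have : (Y 0 ω / ∑ j ∈ Finset.range N, Y j ω) ^ 3 ≤ 1 := pow_le_one₀ h1 h2
        nlinarith [pow_nonneg hmin0 3]
      · have hind : {ω | ∑ j ∈ Finset.Ico 1 N, Y j ω ≤ c * N}.indicator
            (fun _ => (1:ℝ)) ω = 0 :=
          Set.indicator_of_notMem (show ω ∉ {ω | ∑ j ∈ Finset.Ico 1 N, Y j ω ≤ c * N} from hTc) _
        rw [hind, add_zero]
        push_neg at hTc
        have hηle : Y 0 ω / ∑ j ∈ Finset.range N, Y j ω ≤ min 1 (Y 0 ω / (c * N)) := by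
          refine le_min h2 ?_
          rw [hsplit]
          refine div_le_div_of_nonneg_left (hω 0).le hcN ?_
          nlinarith [(hω 0)]
        exact pow_le_pow_left₀ h1 hηle 3
    rw [integral_add (hint_min N) hindint, integral_indicator_const (1:ℝ) hsetm] at hle
    simpa [measureReal_def] using hle
  -- dominated convergence for the min term
  have hdct : Tendsto (fun N : ℕ => ∫ ω, (N:ℝ)^2 * (min 1 (Y 0 ω / (c * N))) ^ 3 ∂P)
      atTop (nhds 0) := by
    have key := tendsto_integral_of_dominated_convergence (μ := P)
      (F := fun (n : ℕ) ω => (n:ℝ)^2 * (min 1 (Y 0 ω / (c * n))) ^ 3)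
      (f := fun _ => (0:ℝ)) (bound := fun ω => Y 0 ω ^ 2 / c ^ 2)
      ?_ (hsq.div_const _) ?_ ?_
    · simpa using key
    · intro n
      exact ((measurable_const.min ((hmeas 0).div_const _)).pow_const 3).const_mul
        _ |>.aestronglyMeasurable
    · intro n
      filter_upwards [hpos 0] with ω hω
      rcases Nat.eq_zero_or_pos n with hn | hn
      · subst hn; simp; positivity
      · have hn1 : (1:ℝ) ≤ n := by exact_mod_cast hn
        have hcn : (0:ℝ) < c * n := by positivity
        set m := min 1 (Y 0 ω / (c * n)) with hm_def
        have hm0 : 0 ≤ m := le_min zero_le_one (div_nonneg hω.le hcn.le)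
        have hm1 : m ≤ 1 := min_le_left _ _
        have hmy : m ≤ Y 0 ω / (c * n) := min_le_right _ _
        have h3 : m ^ 3 ≤ m ^ 2 := pow_le_pow_of_le_one hm0 hm1 (by norm_num)
        have h4 : m ^ 2 ≤ (Y 0 ω / (c * n)) ^ 2 := by
          apply pow_le_pow_left₀ hm0 hmy
        rw [Real.norm_eq_abs, abs_of_nonneg (by positivity)]
        have h5 : (n:ℝ)^2 * (Y 0 ω / (c * n)) ^ 2 = Y 0 ω ^ 2 / c ^ 2 := by
          field_simp
        nlinarith [sq_nonneg (n:ℝ)]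
    · filter_upwards [hpos 0] with ω hω
      have hev : ∀ᶠ n : ℕ in atTop,
          (n:ℝ)^2 * (min 1 (Y 0 ω / (c * n))) ^ 3 = (Y 0 ω ^ 3 / c ^ 3) / n := by
        filter_upwards [eventually_ge_atTop (max 1 ⌈Y 0 ω / c⌉₊)] with n hn
        have hn1 : 1 ≤ n := le_trans (le_max_left _ _) hn
        have hn1' : (1:ℝ) ≤ n := by exact_mod_cast hn1
        have hcn : (0:ℝ) < c * n := by positivity
        have hceil : Y 0 ω / c ≤ (n:ℝ) := by
          refine (Nat.le_ceil _).trans ?_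
          exact_mod_cast le_trans (le_max_right _ _) hn
        have hyc : Y 0 ω ≤ c * n := by
          rw [div_le_iff₀ hc] at hceil
          linarith [hceil]
        have hmin : min 1 (Y 0 ω / (c * n)) = Y 0 ω / (c * n) := by
          rw [min_eq_right]
          rw [div_le_one hcn]
          exact hyc
        rw [hmin]
        have hn0 : (n:ℝ) ≠ 0 := by positivity
        field_simp
      refine Tendsto.congr' (Filter.EventuallyEq.symm hev) ?_
      have := tendsto_const_div_pow (Y 0 ω ^ 3 / c ^ 3) 1 one_ne_zero
      simpa using this
  -- assemble with the squeeze theorem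
  refine squeeze_zero'
    (g := fun N : ℕ => (∫ ω, (N:ℝ)^2 * (min 1 (Y 0 ω / (c * N))) ^ 3 ∂P)
      + (N:ℝ)^2 * (ρ ^ N / r)) ?_ ?_ ?_
  · filter_upwards with N
    have : 0 ≤ ∫ ω, (Y 0 ω / ∑ j ∈ Finset.range N, Y j ω) ^ 3 ∂P := by
      refine integral_nonneg_of_ae ?_
      filter_upwards [hae] with ω hω
      rcases Nat.eq_zero_or_pos N with h | h
      · simp [h]
      · obtain ⟨h1, _⟩ := heta N h ω hω
        positivity
    positivity
  · filter_upwards [eventually_ge_atTop 1] with N hN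
    have h1 := hmain N hN
    have h2 := htail N hN
    have hNsq : (0:ℝ) ≤ (N:ℝ)^2 := by positivity
    have h3 : (∫ ω, (Y 0 ω / ∑ j ∈ Finset.range N, Y j ω) ^ 3 ∂P)
        ≤ (∫ ω, (min 1 (Y 0 ω / (c * N))) ^ 3 ∂P) + ρ ^ N / r :=
      h1.trans (add_le_add_right h2 _)
    calc (N:ℝ)^2 * ∫ ω, (Y 0 ω / ∑ j ∈ Finset.range N, Y j ω) ^ 3 ∂P
        ≤ (N:ℝ)^2 * ((∫ ω, (min 1 (Y 0 ω / (c * N))) ^ 3 ∂P) + ρ ^ N / r) :=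
          mul_le_mul_of_nonneg_left h3 hNsq
      _ = (N:ℝ)^2 * (∫ ω, (min 1 (Y 0 ω / (c * N))) ^ 3 ∂P) + (N:ℝ)^2 * (ρ ^ N / r) := by
          ring
      _ = (∫ ω, (N:ℝ)^2 * (min 1 (Y 0 ω / (c * N))) ^ 3 ∂P) + (N:ℝ)^2 * (ρ ^ N / r) := by
          rw [MeasureTheory.integral_const_mul]
  · have h2 : Tendsto (fun N : ℕ => (N:ℝ)^2 * (ρ ^ N / r)) atTop (nhds 0) := by
      have := (tendsto_pow_const_mul_const_pow_of_lt_one 2 hρ0 hρ1).div_const r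
      simpa [mul_div_assoc] using this
    simpa using hdct.add h2
end

section
/- Let Y be a positive random variable satisfying lim_{y→∞} y^α P(Y ≥ y) = 1 with 1 < α < 2, and let I_p(u) = E[Y^p e^{-uY}] for an integer p ≥ 2. Then I_p(u) = α Γ(p - α) u^{α - p} + o(u^{α - p}) as u → 0^+. -/
open MeasureTheory Filter Real

/-- If `Y > 0` with `y^α P(Y ≥ y) → 1` as `y → ∞`, `1 < α < 2`, then for every integer
`p ≥ 2`, `I_p(u) = E[Y^p e^{-uY}] = α Γ(p-α) u^(α-p) + o(u^(α-p))` as `u → 0⁺`. -/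
theorem stmt_12 {Ω : Type*} [MeasurableSpace Ω] (P : Measure Ω) [IsProbabilityMeasure P]
    (α : ℝ) (hα1 : 1 < α) (hα2 : α < 2)
    (Y : Ω → ℝ) (hmeas : Measurable Y) (hpos : ∀ᵐ ω ∂P, 0 < Y ω)
    (htail : Tendsto (fun y : ℝ => y ^ α * (P {ω | y ≤ Y ω}).toReal) atTop (nhds 1))
    (p : ℕ) (hp : 2 ≤ p) :
    Tendsto (fun u : ℝ =>
        ((∫ ω, (Y ω) ^ p * Real.exp (-u * Y ω) ∂P) -
            α * Real.Gamma ((p : ℝ) - α) * u ^ (α - (p : ℝ))) / u ^ (α - (p : ℝ)))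
      (nhdsWithin 0 (Set.Ioi 0)) (nhds 0) := by
  obtain ⟨q, rfl⟩ : ∃ q, p = q + 1 := ⟨p - 1, by omega⟩
  have hq1 : 1 ≤ q := by omega
  have hα0 : (0 : ℝ) < α := by linarith
  -- basic tail function facts
  set T : ℝ → ℝ := fun y => (P {ω | y ≤ Y ω}).toReal with hTdef
  have hT_meas : Measurable T := by
    apply Antitone.measurable
    intro a b hab
    exact ENNReal.toReal_mono (measure_ne_top _ _)
      (measure_mono (fun ω h => le_trans hab h))
  have hT_nonneg : ∀ y, 0 ≤ T y := fun y => ENNReal.toReal_nonneg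
  have hT_le_one : ∀ y, T y ≤ 1 := by
    intro y
    have h1 := ENNReal.toReal_mono ENNReal.one_ne_top
      (prob_le_one (μ := P) (s := {ω | y ≤ Y ω}))
    simpa using h1
  set φ : ℝ → ℝ := fun y => y ^ α * T y with hφdef
  have hφ_meas : Measurable φ :=
    (Real.continuous_rpow_const hα0.le).measurable.mul hT_meas
  have hφ_nonneg : ∀ y, 0 ≤ y → 0 ≤ φ y := fun y hy =>
    mul_nonneg (Real.rpow_nonneg hy _) (hT_nonneg _)
  -- a uniform bound for φ on positives
  obtain ⟨C, hC0, hCb⟩ : ∃ C : ℝ, 0 < C ∧ ∀ y : ℝ, 0 < y → φ y ≤ C := by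
    have h2 : ∀ᶠ y in atTop, φ y < 2 := htail.eventually_lt_const (by norm_num)
    obtain ⟨M, hM⟩ := eventually_atTop.mp h2
    refine ⟨max 2 ((max M 1) ^ α), lt_of_lt_of_le (by norm_num) (le_max_left _ _), ?_⟩
    intro y hy
    rcases le_or_gt (max M 1) y with h | h
    · exact le_trans (hM y (le_trans (le_max_left _ _) h)).le (le_max_left _ _)
    · have h1 : y ^ α ≤ (max M 1) ^ α :=
        Real.rpow_le_rpow hy.le h.le hα0.le
      have : φ y ≤ y ^ α := by
        calc φ y ≤ y ^ α * 1 := by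
              exact mul_le_mul_of_nonneg_left (hT_le_one _) (Real.rpow_nonneg hy.le _)
          _ = y ^ α := mul_one _
      exact le_trans (le_trans this h1) (le_max_right _ _)
  -- the limit kernel W
  set W : ℝ → ℝ := fun s =>
      ((q + 1 : ℝ) * (s ^ q * Real.exp (-s)) - s ^ (q + 1) * Real.exp (-s)) * s ^ (-α)
    with hWdef
  set c1 : ℝ := (q : ℝ) + 1 - α with hc1def
  have hc1 : 0 < c1 := by
    have : (1 : ℝ) ≤ (q : ℝ) := by exact_mod_cast hq1
    simp only [hc1def]; linarith
  have hc2 : 0 < (q : ℝ) + 2 - α := by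
    have : (0 : ℝ) ≤ (q : ℝ) := Nat.cast_nonneg q
    linarith
  have hγ1 : IntegrableOn (fun x : ℝ => Real.exp (-x) * x ^ (c1 - 1)) (Set.Ioi 0) :=
    Real.GammaIntegral_convergent hc1
  have hγ2 : IntegrableOn (fun x : ℝ => Real.exp (-x) * x ^ (((q : ℝ) + 2 - α) - 1)) (Set.Ioi 0) :=
    Real.GammaIntegral_convergent hc2
  have hWeq : Set.EqOn
      (fun s : ℝ => (q + 1 : ℝ) * (Real.exp (-s) * s ^ (c1 - 1)) -
        Real.exp (-s) * s ^ (((q : ℝ) + 2 - α) - 1)) W (Set.Ioi 0) := by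
    intro s hs
    have hs0 : (0 : ℝ) < s := hs
    have e1 : s ^ (c1 - 1) = s ^ q * s ^ (-α) := by
      rw [← Real.rpow_natCast s q, ← Real.rpow_add hs0]
      congr 1
      simp only [hc1def]; ring
    have e2 : s ^ (((q : ℝ) + 2 - α) - 1) = s ^ (q + 1) * s ^ (-α) := by
      rw [← Real.rpow_natCast s (q + 1), ← Real.rpow_add hs0]
      congr 1
      push_cast; ring
    simp only [hWdef, e1, e2]
    ring
  have hW_int : IntegrableOn W (Set.Ioi 0) :=
    IntegrableOn.congr_fun ((hγ1.const_mul ((q:ℝ)+1)).sub hγ2) hWeq measurableSet_Ioi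
  have hW_cont : ContinuousOn W (Set.Ioi 0) := by
    apply ContinuousOn.mul
    · exact (Continuous.continuousOn (by fun_prop))
    · intro s hs
      exact (Real.continuousAt_rpow_const s (-α) (Or.inl (ne_of_gt hs))).continuousWithinAt
  -- value of the integral of W
  have hW_val : ∫ s in Set.Ioi (0:ℝ), W s = α * Real.Gamma c1 := by
    rw [← setIntegral_congr_fun measurableSet_Ioi hWeq]
    rw [integral_sub (hγ1.const_mul _) hγ2, integral_const_mul,
      ← Real.Gamma_eq_integral hc1, ← Real.Gamma_eq_integral hc2]
    have h21 : (q : ℝ) + 2 - α = c1 + 1 := by simp only [hc1def]; ring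
    rw [h21, Real.Gamma_add_one hc1.ne']
    simp only [hc1def]; ring
  -- the key identity
  have key : ∀ u : ℝ, 0 < u →
      (∫ ω, (Y ω) ^ (q + 1) * Real.exp (-u * Y ω) ∂P)
        = u ^ (α - ((q : ℝ) + 1)) * ∫ s in Set.Ioi (0:ℝ), W s * φ (s / u) := by
    intro u hu
    set G : ℝ → ℝ := fun t =>
      (q + 1 : ℝ) * (t ^ q * Real.exp (-(u * t))) - u * (t ^ (q + 1) * Real.exp (-(u * t)))
      with hGdef
    have hG_cont : Continuous G := by fun_prop
    have hG_int : IntegrableOn G (Set.Ioi 0) := by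
      have hbase : ∀ n : ℕ, IntegrableOn (fun t : ℝ => t ^ n * Real.exp (-(u * t)))
          (Set.Ioi 0) := by
        intro n
        have h := integrableOn_rpow_mul_exp_neg_mul_rpow
          (s := (n : ℝ)) (p := 1) (b := u)
          (lt_of_lt_of_le (by norm_num) (Nat.cast_nonneg n)) one_pos hu
        apply h.congr_fun ?_ measurableSet_Ioi
        intro x hx
        simp only [Real.rpow_natCast, Real.rpow_one, neg_mul]
      exact ((hbase q).const_mul _).sub ((hbase (q + 1)).const_mul u)
    -- pointwise layer-cake representation
    have hderiv : ∀ x : ℝ, HasDerivAt (fun t => t ^ (q + 1) * Real.exp (-(u * t))) (G x) x := by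
      intro x
      have h1 : HasDerivAt (fun t : ℝ => t ^ (q + 1)) ((q + 1 : ℕ) * x ^ q) x := by
        simpa using hasDerivAt_pow (q + 1) x
      have h0 : HasDerivAt (fun t : ℝ => -(u * t)) (-u) x := by
        simpa [Pi.neg_def] using ((hasDerivAt_id x).const_mul u).neg
      have h2 : HasDerivAt (fun t : ℝ => Real.exp (-(u * t)))
          (Real.exp (-(u * x)) * -u) x := h0.exp
      have := h1.mul h2
      convert this using 1
      · rfl
      · rfl
      · rfl
      simp only [hGdef]
      push_cast
      ring
    set f : Ω → ℝ → ℝ := fun ω t => (Set.Ioc 0 (Y ω)).indicator G t with hfdef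
    have hlayer : ∀ ω : Ω, 0 < Y ω →
        (Y ω) ^ (q + 1) * Real.exp (-u * Y ω) = ∫ t in Set.Ioi (0:ℝ), f ω t := by
      intro ω hω
      have h1 : ∫ t in Set.Ioi (0:ℝ), f ω t = ∫ t in Set.Ioc 0 (Y ω), G t := by
        rw [hfdef]
        rw [setIntegral_indicator measurableSet_Ioc]
        congr 1
        rw [Set.inter_eq_right.mpr Set.Ioc_subset_Ioi_self]
      have h2 : ∫ t in Set.Ioc 0 (Y ω), G t = ∫ t in (0:ℝ)..(Y ω), G t :=
        (intervalIntegral.integral_of_le hω.le).symm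
      have h3 : ∫ t in (0:ℝ)..(Y ω), G t
          = (Y ω) ^ (q + 1) * Real.exp (-(u * Y ω)) - 0 := by
        have := intervalIntegral.integral_eq_sub_of_hasDerivAt
          (f := fun t => t ^ (q + 1) * Real.exp (-(u * t))) (f' := G)
          (fun x _ => hderiv x) (hG_cont.intervalIntegrable 0 (Y ω))
        rw [this]
        norm_num
      rw [h1, h2, h3, neg_mul]
      ring
    -- Fubini
    have hset : MeasurableSet {z : Ω × ℝ | 0 < z.2 ∧ z.2 ≤ Y z.1} := by
      apply MeasurableSet.inter
      · exact measurable_snd measurableSet_Ioi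
      · exact measurableSet_le measurable_snd (hmeas.comp measurable_fst)
    have hf_eq : Function.uncurry f =
        Set.indicator {z : Ω × ℝ | 0 < z.2 ∧ z.2 ≤ Y z.1} (fun z => G z.2) := by
      funext z
      simp only [Function.uncurry, hfdef, Set.indicator_apply, Set.mem_Ioc, Set.mem_setOf_eq]
    have hf_meas : AEStronglyMeasurable (Function.uncurry f)
        (P.prod (volume.restrict (Set.Ioi 0))) := by
      rw [hf_eq]
      exact ((hG_cont.measurable.comp measurable_snd).indicator hset).aestronglyMeasurable
    have hf_int : Integrable (Function.uncurry f) (P.prod (volume.restrict (Set.Ioi 0))) := by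
      rw [integrable_prod_iff hf_meas]
      constructor
      · refine Eventually.of_forall (fun ω => ?_)
        show Integrable (fun t => (Set.Ioc 0 (Y ω)).indicator G t) (volume.restrict (Set.Ioi 0))
        exact hG_int.indicator measurableSet_Ioc
      · have hb : ∀ ω, (∫ t in Set.Ioi (0:ℝ), ‖f ω t‖)
            ≤ ∫ t in Set.Ioi (0:ℝ), ‖G t‖ := by
          intro ω
          apply integral_mono_of_nonneg (Eventually.of_forall fun t => norm_nonneg _)
            hG_int.norm
          refine Eventually.of_forall (fun t => ?_)
          exact norm_indicator_le_norm_self G t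
        apply Integrable.mono' (integrable_const (∫ t in Set.Ioi (0:ℝ), ‖G t‖))
        · exact hf_meas.norm.integral_prod_right'
        · refine Eventually.of_forall (fun ω => ?_)
          rw [Real.norm_eq_abs, abs_of_nonneg (integral_nonneg fun t => norm_nonneg _)]
          exact hb ω
    have step1 : (∫ ω, (Y ω) ^ (q + 1) * Real.exp (-u * Y ω) ∂P)
        = ∫ t in Set.Ioi (0:ℝ), G t * T t := by
      have e1 : (∫ ω, (Y ω) ^ (q + 1) * Real.exp (-u * Y ω) ∂P)
          = ∫ ω, (∫ t in Set.Ioi (0:ℝ), f ω t) ∂P := by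
        apply integral_congr_ae
        filter_upwards [hpos] with ω hω
        exact hlayer ω hω
      rw [e1, integral_integral_swap hf_int]
      apply setIntegral_congr_fun measurableSet_Ioi
      intro t ht
      have ht0 : (0 : ℝ) < t := ht
      show (∫ ω, f ω t ∂P) = G t * T t
      have e2 : ∀ ω : Ω, f ω t = ({ω : Ω | t ≤ Y ω}).indicator (fun _ => G t) ω := by
        intro ω
        simp only [hfdef, Set.indicator_apply, Set.mem_Ioc, Set.mem_setOf_eq, ht0, true_and]
      have hms : MeasurableSet {ω : Ω | t ≤ Y ω} := hmeas measurableSet_Ici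
      rw [integral_congr_ae (Eventually.of_forall e2)]
      rw [integral_indicator_const _ hms]
      simp only [hTdef, smul_eq_mul, measureReal_def]
      ring
    -- substitution t = s / u
    have step2 : ∫ t in Set.Ioi (0:ℝ), G t * T t
        = u⁻¹ • ∫ s in Set.Ioi (0:ℝ), G (u⁻¹ * s) * T (u⁻¹ * s) := by
      have := integral_comp_mul_left_Ioi (fun t => G t * T t) 0 (inv_pos.mpr hu)
      rw [mul_zero] at this
      rw [this, smul_smul, inv_inv, inv_mul_cancel₀ hu.ne', one_smul]
    rw [step1, step2, ← integral_smul, ← integral_const_mul]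
    apply setIntegral_congr_fun measurableSet_Ioi
    intro s hs
    show u⁻¹ • (G (u⁻¹ * s) * T (u⁻¹ * s))
      = u ^ (α - ((q : ℝ) + 1)) * (W s * φ (s / u))
    have hs0 : (0 : ℝ) < s := hs
    have hdiv : u⁻¹ * s = s / u := by rw [inv_mul_eq_div]
    have huc : u * (s / u) = s := by field_simp
    have hsu : (0 : ℝ) < s / u := div_pos hs0 hu
    simp only [smul_eq_mul, hdiv, hGdef, hWdef, hφdef, huc]
    have e1 : (s / u) ^ α = s ^ α / u ^ α := Real.div_rpow hs0.le hu.le α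
    have e2 : u ^ (α - ((q : ℝ) + 1)) = u ^ α / u ^ (q + 1 : ℕ) := by
      rw [Real.rpow_sub hu, ← Real.rpow_natCast u (q + 1)]
      push_cast
      ring_nf
    have e3 : s ^ (-α) = (s ^ α)⁻¹ := Real.rpow_neg hs0.le α
    have e4 : (s / u) ^ q = s ^ q / u ^ q := div_pow s u q
    have e5 : (s / u) ^ (q + 1) = s ^ (q + 1) / u ^ (q + 1) := div_pow s u (q + 1)
    rw [e1, e2, e3, e4, e5]
    have hsα : (0 : ℝ) < s ^ α := Real.rpow_pos_of_pos hs0 α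
    have huα : (0 : ℝ) < u ^ α := Real.rpow_pos_of_pos hu α
    have huq : u ^ (q + 1) ≠ 0 := pow_ne_zero _ hu.ne'
    field_simp
    ring
  -- dominated convergence
  have hDCT : Tendsto (fun u : ℝ => ∫ s in Set.Ioi (0:ℝ), W s * φ (s / u))
      (nhdsWithin 0 (Set.Ioi 0)) (nhds (α * Real.Gamma c1)) := by
    rw [← hW_val]
    apply tendsto_integral_filter_of_dominated_convergence (bound := fun s => C * |W s|)
    · refine Eventually.of_forall (fun u => ?_)
      exact (hW_cont.aestronglyMeasurable measurableSet_Ioi).mul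
        ((hφ_meas.comp (measurable_id.div_const u)).aestronglyMeasurable)
    · filter_upwards [self_mem_nhdsWithin] with u hu
      rw [ae_restrict_iff' measurableSet_Ioi]
      refine Eventually.of_forall (fun s hs => ?_)
      have hs0 : (0 : ℝ) < s := hs
      have hsu : (0 : ℝ) < s / u := div_pos hs0 hu
      rw [Real.norm_eq_abs, abs_mul, abs_of_nonneg (hφ_nonneg _ hsu.le)]
      calc |W s| * φ (s / u) ≤ |W s| * C :=
            mul_le_mul_of_nonneg_left (hCb _ hsu) (abs_nonneg _)
        _ = C * |W s| := mul_comm _ _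
    · exact hW_int.abs.const_mul C
    · rw [ae_restrict_iff' measurableSet_Ioi]
      refine Eventually.of_forall (fun s hs => ?_)
      have hs0 : (0 : ℝ) < s := hs
      have h1 : Tendsto (fun u : ℝ => s / u) (nhdsWithin 0 (Set.Ioi 0)) atTop := by
        have := tendsto_inv_nhdsGT_zero.const_mul_atTop hs0
        apply this.congr
        intro u
        rw [div_eq_mul_inv]
      have h2 : Tendsto (fun u : ℝ => φ (s / u)) (nhdsWithin 0 (Set.Ioi 0)) (nhds 1) :=
        htail.comp h1
      have := tendsto_const_nhds (x := W s) (f := (nhdsWithin (0:ℝ) (Set.Ioi 0))) |>.mul h2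
      simpa using this
  -- conclusion
  have hfinal : Tendsto (fun u : ℝ =>
      (∫ s in Set.Ioi (0:ℝ), W s * φ (s / u)) - α * Real.Gamma c1)
      (nhdsWithin 0 (Set.Ioi 0)) (nhds 0) := by
    have := hDCT.sub_const (α * Real.Gamma c1)
    simpa using this
  have hGammaArg : ((q + 1 : ℕ) : ℝ) - α = c1 := by push_cast; simp only [hc1def]
  apply hfinal.congr'
  filter_upwards [self_mem_nhdsWithin] with u hu
  have hu0 : (0 : ℝ) < u := hu
  have hrpow : (0 : ℝ) < u ^ (α - ((q + 1 : ℕ) : ℝ)) := Real.rpow_pos_of_pos hu0 _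
  rw [key u hu0]
  rw [hGammaArg]
  have harg : α - ((q + 1 : ℕ) : ℝ) = α - ((q : ℝ) + 1) := by push_cast; ring
  rw [harg] at hrpow ⊢
  field_simp
end

section
/- Let Y be a positive random variable satisfying lim_{y→∞} y · P(Y ≥ y) = 1, and let I_0(u) = E[e^{-uY}]. Then I_0(u) = 1 + u log u + o(u log u) as u → 0^+. -/
open MeasureTheory Filter Real Set


lemma aux_ftc {u : ℝ} (hu : 0 < u) (x : ℝ) :
    ∫ t in (0:ℝ)..x, u * Real.exp (-u * t) = 1 - Real.exp (-u * x) := by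
  have hderiv : ∀ t ∈ Set.uIcc (0:ℝ) x,
      HasDerivAt (fun s => -Real.exp (-u * s)) (u * Real.exp (-u * t)) t := by
    intro t _
    have h1 : HasDerivAt (fun s : ℝ => -u * s) (-u) t := by
      simpa using (hasDerivAt_id t).const_mul (-u)
    have h3 := h1.exp.neg
    rw [show u * Real.exp (-u * t) = -(Real.exp (-u * t) * -u) by ring]
    exact h3
  have hint : IntervalIntegrable (fun t => u * Real.exp (-u * t)) volume 0 x :=
    (Continuous.intervalIntegrable (by continuity)) _ _
  rw [intervalIntegral.integral_eq_sub_of_hasDerivAt hderiv hint]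
  simp [mul_zero, Real.exp_zero]
  ring

lemma aux_rep {Ω : Type*} [MeasurableSpace Ω] (P : Measure Ω) [IsProbabilityMeasure P]
    (Y : Ω → ℝ) (hmeas : Measurable Y) (hpos : ∀ᵐ ω ∂P, 0 < Y ω) {u : ℝ} (hu : 0 < u) :
    ∫ ω, Real.exp (-u * Y ω) ∂P
      = 1 - ∫ t in Set.Ioi (0:ℝ), (P {ω | t ≤ Y ω}).toReal * (u * Real.exp (-u * t)) := by
  have g_intble : ∀ t > (0:ℝ), IntervalIntegrable (fun s => u * Real.exp (-u * s)) volume 0 t :=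
    fun t _ => (Continuous.intervalIntegrable (by continuity)) _ _
  have g_nn : ∀ᵐ t ∂(volume.restrict (Set.Ioi (0:ℝ))), 0 ≤ u * Real.exp (-u * t) :=
    Filter.Eventually.of_forall fun t => by positivity
  have key := lintegral_comp_eq_lintegral_meas_le_mul P (f := Y)
    (g := fun s => u * Real.exp (-u * s)) (hpos.mono fun ω h => h.le)
    hmeas.aemeasurable g_intble g_nn
  simp_rw [aux_ftc hu] at key
  -- LHS conversion
  have hint_exp : Integrable (fun ω => Real.exp (-u * Y ω)) P := by
    refine Integrable.mono' (integrable_const 1)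
      ((hmeas.const_mul (-u)).exp.aestronglyMeasurable) ?_
    filter_upwards [hpos] with ω hω
    rw [Real.norm_eq_abs, abs_of_pos (Real.exp_pos _)]
    exact Real.exp_le_one_iff.mpr (by nlinarith)
  have hL : ∫ ω, (1 - Real.exp (-u * Y ω)) ∂P
      = (∫⁻ ω, ENNReal.ofReal (1 - Real.exp (-u * Y ω)) ∂P).toReal := by
    refine integral_eq_lintegral_of_nonneg_ae ?_
      ((aestronglyMeasurable_const.sub ((hmeas.const_mul (-u)).exp.aestronglyMeasurable)))
    filter_upwards [hpos] with ω hω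
    have : Real.exp (-u * Y ω) ≤ 1 := Real.exp_le_one_iff.mpr (by nlinarith)
    simp only [Pi.zero_apply]
    linarith
  have hR : ∫ t in Set.Ioi (0:ℝ), (P {ω | t ≤ Y ω}).toReal * (u * Real.exp (-u * t))
      = (∫⁻ t in Set.Ioi (0:ℝ), P {ω | t ≤ Y ω} * ENNReal.ofReal (u * Real.exp (-u * t))).toReal := by
    have hGmeas : Measurable (fun t : ℝ => (P {ω | t ≤ Y ω}).toReal) := by
      apply Measurable.ennreal_toReal
      exact Antitone.measurable (fun s t hst => measure_mono (fun ω h => hst.trans h))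
    rw [integral_eq_lintegral_of_nonneg_ae (f := fun t => (P {ω | t ≤ Y ω}).toReal * (u * Real.exp (-u * t)))
      (Filter.Eventually.of_forall fun t => by show (0:ℝ) ≤ _; positivity)
      ((hGmeas.mul (by continuity : Continuous fun t => u * Real.exp (-u*t)).measurable).aestronglyMeasurable)]
    congr 1
    refine lintegral_congr fun t => ?_
    rw [ENNReal.ofReal_mul ENNReal.toReal_nonneg, ENNReal.ofReal_toReal (measure_ne_top _ _)]
  have hsub : ∫ ω, (1 - Real.exp (-u * Y ω)) ∂P = 1 - ∫ ω, Real.exp (-u * Y ω) ∂P := by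
    rw [integral_sub (integrable_const 1) hint_exp]
    simp
  rw [hL, key, ← hR] at hsub
  linarith


set_option maxHeartbeats 2000000 in
lemma aux_main (G : ℝ → ℝ) (hGmeas : Measurable G) (hG0 : ∀ t, 0 ≤ G t) (hG1 : ∀ t, G t ≤ 1)
    (htail : Tendsto (fun y => y * G y) atTop (nhds 1)) :
    Tendsto (fun u => (∫ t in Set.Ioi (0:ℝ), G t * (u * Real.exp (-u * t))) / (u * Real.log u⁻¹))
      (nhdsWithin 0 (Set.Ioi 0)) (nhds 1) := by
  rw [Metric.tendsto_nhds]
  intro ε hε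
  set ε' : ℝ := min (ε/2) (1/2) with hε'def
  have hε'pos : 0 < ε' := lt_min (by linarith) (by norm_num)
  have hε'le : ε' ≤ 1/2 := min_le_right _ _
  have hε'le2 : ε' ≤ ε/2 := min_le_left _ _
  obtain ⟨M₀, hM₀⟩ := Filter.eventually_atTop.mp (Metric.tendsto_nhds.mp htail ε' hε'pos)
  set M : ℝ := max M₀ 1 with hMdef
  have hM1 : (1:ℝ) ≤ M := le_max_right _ _
  have hMpos : (0:ℝ) < M := by linarith
  have htb : ∀ t : ℝ, M ≤ t → |t * G t - 1| < ε' := by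
    intro t ht
    have := hM₀ t (le_trans (le_max_left _ _) ht)
    rwa [Real.dist_eq] at this
  have hGup : ∀ t : ℝ, M ≤ t → G t ≤ (1 + ε') * t⁻¹ := by
    intro t ht
    have h1 := (abs_lt.mp (htb t ht)).2
    have h2 : 0 < t := lt_of_lt_of_le hMpos ht
    have key : G t = t⁻¹ * (t * G t) := by field_simp
    rw [key, mul_comm (1 + ε') t⁻¹]
    exact mul_le_mul_of_nonneg_left (by linarith) (inv_nonneg.mpr h2.le)
  have hGlo : ∀ t : ℝ, M ≤ t → (1 - ε') * t⁻¹ ≤ G t := by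
    intro t ht
    have h1 := (abs_lt.mp (htb t ht)).1
    have h2 : 0 < t := lt_of_lt_of_le hMpos ht
    have key : G t = t⁻¹ * (t * G t) := by field_simp
    rw [key, mul_comm (1 - ε') t⁻¹]
    exact mul_le_mul_of_nonneg_left (by linarith) (inv_nonneg.mpr h2.le)
  -- limits
  have hlog_top : Tendsto (fun u : ℝ => Real.log u⁻¹) (nhdsWithin 0 (Set.Ioi 0)) atTop := by
    simp_rw [Real.log_inv]
    exact tendsto_neg_atBot_atTop.comp Real.tendsto_log_nhdsGT_zero
  have hinv0 : Tendsto (fun u : ℝ => (Real.log u⁻¹)⁻¹) (nhdsWithin 0 (Set.Ioi 0)) (nhds 0) :=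
    hlog_top.inv_tendsto_atTop
  have hmem1 : Set.Ioo (0:ℝ) 1 ∈ nhdsWithin (0:ℝ) (Set.Ioi 0) :=
    Ioo_mem_nhdsGT_of_mem ⟨le_refl 0, one_pos⟩
  have hLpos' : ∀ u : ℝ, 0 < u → u < 1 → 0 < Real.log u⁻¹ := by
    intro u h0 h1
    apply Real.log_pos
    rw [one_lt_inv_iff₀]
    exact ⟨h0, h1⟩
  have hratio_l : Tendsto (fun u : ℝ => Real.log (ε' / (u * M)) / Real.log u⁻¹)
      (nhdsWithin 0 (Set.Ioi 0)) (nhds 1) := by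
    have base : Tendsto (fun u : ℝ => Real.log (ε' / M) * (Real.log u⁻¹)⁻¹ + 1)
        (nhdsWithin 0 (Set.Ioi 0)) (nhds 1) := by
      have := (hinv0.const_mul (Real.log (ε' / M))).add_const 1
      simpa using this
    apply Tendsto.congr' _ base
    filter_upwards [hmem1] with u hu
    obtain ⟨hu0, hu1⟩ := hu
    have hL : Real.log u⁻¹ ≠ 0 := ne_of_gt (hLpos' u hu0 hu1)
    have hexpand : Real.log (ε' / (u * M)) = Real.log (ε' / M) + Real.log u⁻¹ := by
      rw [Real.log_div hε'pos.ne' (mul_ne_zero hu0.ne' hMpos.ne'),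
        Real.log_mul hu0.ne' hMpos.ne', Real.log_div hε'pos.ne' hMpos.ne', Real.log_inv]
      ring
    rw [hexpand, add_div, div_self hL]; ring
  have hratio_r : Tendsto (fun u : ℝ => Real.log (u⁻¹ / M) / Real.log u⁻¹)
      (nhdsWithin 0 (Set.Ioi 0)) (nhds 1) := by
    have base : Tendsto (fun u : ℝ => (-Real.log M) * (Real.log u⁻¹)⁻¹ + 1)
        (nhdsWithin 0 (Set.Ioi 0)) (nhds 1) := by
      have := (hinv0.const_mul (-Real.log M)).add_const 1
      simpa using this
    apply Tendsto.congr' _ base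
    filter_upwards [hmem1] with u hu
    obtain ⟨hu0, hu1⟩ := hu
    have hL : Real.log u⁻¹ ≠ 0 := ne_of_gt (hLpos' u hu0 hu1)
    have hexpand : Real.log (u⁻¹ / M) = (-Real.log M) + Real.log u⁻¹ := by
      rw [Real.log_div (inv_ne_zero hu0.ne') hMpos.ne']
      ring
    rw [hexpand, add_div, div_self hL]; ring
  have hClow : 1 - ε < (1 - ε') * Real.exp (-ε') := by
    have h1 : 1 - ε' < Real.exp (-ε') := by
      have := Real.add_one_lt_exp (x := -ε') (by linarith : (-ε') ≠ 0)
      linarith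
    nlinarith [mul_pos (show (0:ℝ) < 1 - ε' by linarith)
      (show (0:ℝ) < Real.exp (-ε') - (1 - ε') by linarith)]
  have hev_l : ∀ᶠ u in nhdsWithin (0:ℝ) (Set.Ioi 0),
      1 - ε < (1 - ε') * Real.exp (-ε') * (Real.log (ε' / (u * M)) / Real.log u⁻¹) := by
    have ht : Tendsto (fun u : ℝ =>
        (1 - ε') * Real.exp (-ε') * (Real.log (ε' / (u * M)) / Real.log u⁻¹))
        (nhdsWithin 0 (Set.Ioi 0)) (nhds ((1 - ε') * Real.exp (-ε'))) := by
      simpa using hratio_l.const_mul ((1 - ε') * Real.exp (-ε'))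
    exact ht.eventually (eventually_gt_nhds hClow)
  have hev_r : ∀ᶠ u in nhdsWithin (0:ℝ) (Set.Ioi 0),
      M * (Real.log u⁻¹)⁻¹ + (1 + ε') * (Real.log (u⁻¹ / M) / Real.log u⁻¹)
        + (1 + ε') * Real.exp (-1) * (Real.log u⁻¹)⁻¹ < 1 + ε := by
    have ht : Tendsto (fun u : ℝ => M * (Real.log u⁻¹)⁻¹
        + (1 + ε') * (Real.log (u⁻¹ / M) / Real.log u⁻¹)
        + (1 + ε') * Real.exp (-1) * (Real.log u⁻¹)⁻¹)
        (nhdsWithin 0 (Set.Ioi 0)) (nhds (1 + ε')) := by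
      have := ((hinv0.const_mul M).add (hratio_r.const_mul (1 + ε'))).add
        (hinv0.const_mul ((1 + ε') * Real.exp (-1)))
      simpa using this
    exact ht.eventually (eventually_lt_nhds (by linarith))
  have hmem2 : Set.Ioo (0:ℝ) (ε' / M) ∈ nhdsWithin (0:ℝ) (Set.Ioi 0) :=
    Ioo_mem_nhdsGT_of_mem ⟨le_refl 0, div_pos hε'pos hMpos⟩
  filter_upwards [hev_l, hev_r, hmem2] with u hl hr hu
  obtain ⟨hu0, huM⟩ := hu
  have huM' : u * M < ε' := (lt_div_iff₀ hMpos).mp huM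
  have hu1 : u < 1 := by nlinarith [mul_le_mul_of_nonneg_left hM1 hu0.le, huM', hε'le]
  have hLpos : 0 < Real.log u⁻¹ := hLpos' u hu0 hu1
  have hMe : M < ε' / u := by rw [lt_div_iff₀ hu0]; nlinarith
  have hεu : ε' / u ≤ u⁻¹ := by
    rw [div_le_iff₀ hu0, inv_mul_cancel₀ hu0.ne']; linarith
  have hMu : M < u⁻¹ := lt_of_lt_of_le hMe hεu
  set k : ℝ → ℝ := fun t => G t * (u * Real.exp (-u * t)) with hk
  have hk_meas : Measurable k :=
    hGmeas.mul ((Real.measurable_exp.comp (measurable_id.const_mul (-u))).const_mul u)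
  have hk_nn : ∀ t, 0 ≤ k t := fun t => mul_nonneg (hG0 t) (by positivity)
  have hexp_int : ∀ a : ℝ, IntegrableOn (fun t => u * Real.exp (-u * t)) (Set.Ioi a) :=
    fun a => (exp_neg_integrableOn_Ioi a hu0).const_mul u
  have hk_int : IntegrableOn k (Set.Ioi (0:ℝ)) := by
    refine Integrable.mono' (hexp_int 0) hk_meas.aestronglyMeasurable ?_
    refine Filter.Eventually.of_forall fun t => ?_
    rw [Real.norm_eq_abs, abs_of_nonneg (hk_nn t)]
    simp only [hk]
    nlinarith [mul_nonneg (sub_nonneg.mpr (hG1 t))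
      (le_of_lt (mul_pos hu0 (Real.exp_pos (-u * t))))]
  -- lower bound
  have hIoc0 : Set.Ioc M (ε' / u) ⊆ Set.Ioi (0:ℝ) := fun t ht => hMpos.trans ht.1
  have low1 : ∫ t in Set.Ioc M (ε' / u), k t ≤ ∫ t in Set.Ioi (0:ℝ), k t := by
    refine setIntegral_mono_set hk_int ?_ (HasSubset.Subset.eventuallyLE hIoc0)
    exact Filter.Eventually.of_forall fun t => hk_nn t
  have hinv_int : ∀ b : ℝ, M ≤ b → IntegrableOn (fun t : ℝ => t⁻¹) (Set.Ioc M b) := by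
    intro b hb
    have : IntervalIntegrable (fun t : ℝ => t⁻¹) volume M b := by
      apply intervalIntegral.intervalIntegrable_inv
      · intro x hx
        rw [Set.uIcc_of_le hb] at hx
        exact ne_of_gt (lt_of_lt_of_le hMpos hx.1)
      · exact continuousOn_id
    exact this.1
  have low2 : ∫ t in Set.Ioc M (ε' / u), (1 - ε') * Real.exp (-ε') * u * t⁻¹
      ≤ ∫ t in Set.Ioc M (ε' / u), k t := by
    refine setIntegral_mono_on ((hinv_int _ hMe.le).const_mul _)
      (hk_int.mono_set hIoc0) measurableSet_Ioc ?_
    intro t ht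
    simp only [hk]
    have htM : M ≤ t := ht.1.le
    have ht0 : 0 < t := hMpos.trans_le htM
    have hGl := hGlo t htM
    have hexp : Real.exp (-ε') ≤ Real.exp (-u * t) := by
      apply Real.exp_le_exp.mpr
      have h2 : t * u ≤ ε' := (le_div_iff₀ hu0).mp ht.2
      nlinarith
    calc (1 - ε') * Real.exp (-ε') * u * t⁻¹
        = ((1 - ε') * t⁻¹) * (u * Real.exp (-ε')) := by ring
      _ ≤ G t * (u * Real.exp (-ε')) := mul_le_mul_of_nonneg_right hGl (by positivity)
      _ ≤ G t * (u * Real.exp (-u * t)) := by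
          exact mul_le_mul_of_nonneg_left (mul_le_mul_of_nonneg_left hexp hu0.le) (hG0 t)
  have low3 : ∫ t in Set.Ioc M (ε' / u), (1 - ε') * Real.exp (-ε') * u * t⁻¹
      = (1 - ε') * Real.exp (-ε') * u * Real.log (ε' / (u * M)) := by
    rw [MeasureTheory.integral_const_mul, ← intervalIntegral.integral_of_le hMe.le,
      integral_inv_of_pos hMpos (div_pos hε'pos hu0)]
    rw [div_div]
  have hlow : (1 - ε') * Real.exp (-ε') * u * Real.log (ε' / (u * M))
      ≤ ∫ t in Set.Ioi (0:ℝ), k t := le_trans (le_of_eq low3.symm) (le_trans low2 low1)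
  -- upper bound
  have e1 : ∫ t in Set.Ioi (0:ℝ), k t
      = (∫ t in Set.Ioc 0 M, k t) + ∫ t in Set.Ioi M, k t := by
    rw [← setIntegral_union (Set.Ioc_disjoint_Ioi le_rfl) measurableSet_Ioi
      (hk_int.mono_set Set.Ioc_subset_Ioi_self) (hk_int.mono_set (Set.Ioi_subset_Ioi hMpos.le)),
      Set.Ioc_union_Ioi_eq_Ioi hMpos.le]
  have e2 : ∫ t in Set.Ioi M, k t
      = (∫ t in Set.Ioc M u⁻¹, k t) + ∫ t in Set.Ioi u⁻¹, k t := by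
    rw [← setIntegral_union (Set.Ioc_disjoint_Ioi le_rfl) measurableSet_Ioi
      (hk_int.mono_set fun t ht => hMpos.trans ht.1)
      (hk_int.mono_set (Set.Ioi_subset_Ioi (le_trans hMpos.le hMu.le))),
      Set.Ioc_union_Ioi_eq_Ioi hMu.le]
  have b1 : ∫ t in Set.Ioc (0:ℝ) M, k t ≤ u * M := by
    have step : ∫ t in Set.Ioc (0:ℝ) M, k t ≤ ∫ _t in Set.Ioc (0:ℝ) M, u := by
      refine setIntegral_mono_on (hk_int.mono_set Set.Ioc_subset_Ioi_self)
        (integrableOn_const (by rw [Real.volume_Ioc]; exact ENNReal.ofReal_lt_top.ne))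
        measurableSet_Ioc ?_
      intro t ht
      simp only [hk]
      have h1 : Real.exp (-u * t) ≤ 1 := Real.exp_le_one_iff.mpr (by nlinarith [ht.1])
      calc G t * (u * Real.exp (-u * t)) ≤ 1 * (u * 1) :=
            mul_le_mul (hG1 t) (mul_le_mul_of_nonneg_left h1 hu0.le) (by positivity) one_pos.le
        _ = u := by ring
    rw [setIntegral_const, Real.volume_real_Ioc_of_le hMpos.le] at step
    rw [smul_eq_mul] at step
    linarith
  have b2 : ∫ t in Set.Ioc M u⁻¹, k t ≤ (1 + ε') * u * Real.log (u⁻¹ / M) := by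
    have mono : ∫ t in Set.Ioc M u⁻¹, k t ≤ ∫ t in Set.Ioc M u⁻¹, (1 + ε') * u * t⁻¹ := by
      refine setIntegral_mono_on (hk_int.mono_set fun t ht => hMpos.trans ht.1)
        ((hinv_int _ hMu.le).const_mul _) measurableSet_Ioc ?_
      intro t ht
      simp only [hk]
      have htM : M ≤ t := ht.1.le
      have ht0 : 0 < t := hMpos.trans_le htM
      have hGu := hGup t htM
      have hexp1 : Real.exp (-u * t) ≤ 1 := Real.exp_le_one_iff.mpr (by nlinarith)
      calc G t * (u * Real.exp (-u * t)) ≤ ((1 + ε') * t⁻¹) * (u * 1) :=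
            mul_le_mul hGu (mul_le_mul_of_nonneg_left hexp1 hu0.le) (by positivity) (by positivity)
        _ = (1 + ε') * u * t⁻¹ := by ring
    have hval : ∫ t in Set.Ioc M u⁻¹, (1 + ε') * u * t⁻¹ = (1 + ε') * u * Real.log (u⁻¹ / M) := by
      rw [MeasureTheory.integral_const_mul, ← intervalIntegral.integral_of_le hMu.le,
        integral_inv_of_pos hMpos (inv_pos.mpr hu0)]
    linarith
  have b3 : ∫ t in Set.Ioi u⁻¹, k t ≤ (1 + ε') * u * Real.exp (-1) := by
    have hd_int : IntegrableOn (fun t => (1 + ε') * u * (u * Real.exp (-u * t)))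
        (Set.Ioi u⁻¹) := (hexp_int u⁻¹).const_mul ((1 + ε') * u)
    have mono : ∫ t in Set.Ioi u⁻¹, k t
        ≤ ∫ t in Set.Ioi u⁻¹, (1 + ε') * u * (u * Real.exp (-u * t)) := by
      refine setIntegral_mono_on (hk_int.mono_set (Set.Ioi_subset_Ioi (by positivity)))
        hd_int measurableSet_Ioi ?_
      intro t ht
      simp only [hk]
      have ht0 : 0 < t := lt_trans (by positivity) ht
      have htinv : t⁻¹ ≤ u := by
        have := inv_anti₀ (inv_pos.mpr hu0) (le_of_lt ht)
        rwa [inv_inv] at this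
      have hGt : G t ≤ (1 + ε') * u := by
        calc G t ≤ (1 + ε') * t⁻¹ := hGup t (le_trans hMu.le ht.le)
          _ ≤ (1 + ε') * u := mul_le_mul_of_nonneg_left htinv (by linarith)
      exact mul_le_mul_of_nonneg_right hGt (by positivity)
    have hval : ∫ t in Set.Ioi u⁻¹, (1 + ε') * u * (u * Real.exp (-u * t))
        = (1 + ε') * u * Real.exp (-1) := by
      rw [MeasureTheory.integral_const_mul, MeasureTheory.integral_const_mul]
      have hcv : ∫ t in Set.Ioi u⁻¹, Real.exp (-u * t) = u⁻¹ * Real.exp (-(u * u⁻¹)) := by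
        have h := integral_comp_mul_left_Ioi (fun x => Real.exp (-x)) u⁻¹ hu0
        simp only [smul_eq_mul, integral_exp_neg_Ioi] at h
        simpa [neg_mul] using h
      rw [hcv, mul_inv_cancel₀ hu0.ne']
      field_simp
    linarith
  have hupp : ∫ t in Set.Ioi (0:ℝ), k t
      ≤ u * M + (1 + ε') * u * Real.log (u⁻¹ / M) + (1 + ε') * u * Real.exp (-1) := by
    rw [e1, e2]; linarith
  -- conclude
  have hdivpos : 0 < u * Real.log u⁻¹ := mul_pos hu0 hLpos
  rw [Real.dist_eq, abs_lt]
  constructor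
  · have h1 : (1 - ε') * Real.exp (-ε') * u * Real.log (ε' / (u * M)) / (u * Real.log u⁻¹)
        ≤ (∫ t in Set.Ioi (0:ℝ), k t) / (u * Real.log u⁻¹) :=
      (div_le_div_iff_of_pos_right hdivpos).mpr hlow
    have heq : (1 - ε') * Real.exp (-ε') * u * Real.log (ε' / (u * M)) / (u * Real.log u⁻¹)
        = (1 - ε') * Real.exp (-ε') * (Real.log (ε' / (u * M)) / Real.log u⁻¹) := by
      rw [mul_comm u (Real.log u⁻¹),
        show (1 - ε') * Real.exp (-ε') * u * Real.log (ε' / (u * M))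
          = ((1 - ε') * Real.exp (-ε') * Real.log (ε' / (u * M))) * u from by ring,
        mul_div_mul_right _ _ hu0.ne']
      ring
    rw [heq] at h1
    linarith
  · have h2 : (∫ t in Set.Ioi (0:ℝ), k t) / (u * Real.log u⁻¹)
        ≤ (u * M + (1 + ε') * u * Real.log (u⁻¹ / M) + (1 + ε') * u * Real.exp (-1))
          / (u * Real.log u⁻¹) := (div_le_div_iff_of_pos_right hdivpos).mpr hupp
    have heq : (u * M + (1 + ε') * u * Real.log (u⁻¹ / M) + (1 + ε') * u * Real.exp (-1))
          / (u * Real.log u⁻¹)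
        = M * (Real.log u⁻¹)⁻¹ + (1 + ε') * (Real.log (u⁻¹ / M) / Real.log u⁻¹)
          + (1 + ε') * Real.exp (-1) * (Real.log u⁻¹)⁻¹ := by
      rw [mul_comm u (Real.log u⁻¹),
        show u * M + (1 + ε') * u * Real.log (u⁻¹ / M) + (1 + ε') * u * Real.exp (-1)
          = (M + (1 + ε') * Real.log (u⁻¹ / M) + (1 + ε') * Real.exp (-1)) * u from by ring,
        mul_div_mul_right _ _ hu0.ne']
      ring
    rw [heq] at h2
    linarith

/-- If `Y > 0` with `y · P(Y ≥ y) → 1` as `y → ∞`, then the Laplace transform satisfies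
`I_0(u) = 1 + u log u + o(u log u)` as `u → 0⁺`. -/
theorem stmt_13 {Ω : Type*} [MeasurableSpace Ω] (P : Measure Ω) [IsProbabilityMeasure P]
    (Y : Ω → ℝ) (hmeas : Measurable Y) (hpos : ∀ᵐ ω ∂P, 0 < Y ω)
    (htail : Tendsto (fun y : ℝ => y * (P {ω | y ≤ Y ω}).toReal) atTop (nhds 1)) :
    Tendsto (fun u : ℝ =>
        ((∫ ω, Real.exp (-u * Y ω) ∂P) - (1 + u * Real.log u)) / (u * Real.log u))
      (nhdsWithin 0 (Set.Ioi 0)) (nhds 0) := by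
  set G : ℝ → ℝ := fun t => (P {ω | t ≤ Y ω}).toReal with hG
  have hGmeas : Measurable G :=
    Measurable.ennreal_toReal
      (Antitone.measurable fun s t hst => measure_mono fun ω h => hst.trans h)
  have hG0 : ∀ t, 0 ≤ G t := fun t => ENNReal.toReal_nonneg
  have hG1 : ∀ t, G t ≤ 1 := by
    intro t
    calc G t ≤ (P Set.univ).toReal :=
          ENNReal.toReal_mono (measure_ne_top _ _) (measure_mono (Set.subset_univ _))
      _ = 1 := by simp
  have H := aux_main G hGmeas hG0 hG1 htail
  have H1 : Tendsto (fun u : ℝ =>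
      (∫ t in Set.Ioi (0:ℝ), G t * (u * Real.exp (-u * t))) / (u * Real.log u⁻¹) - 1)
      (nhdsWithin 0 (Set.Ioi 0)) (nhds 0) := by
    simpa using H.sub_const 1
  apply Tendsto.congr' _ H1
  filter_upwards [Ioo_mem_nhdsGT_of_mem (Set.left_mem_Ico.mpr one_pos)] with u hu
  obtain ⟨hu0, hu1⟩ := hu
  have hlogneg : Real.log u < 0 := Real.log_neg hu0 hu1
  have h1 : u * Real.log u ≠ 0 := ne_of_lt (mul_neg_of_pos_of_neg hu0 hlogneg)
  simp only [hG]
  rw [aux_rep P Y hmeas hpos hu0, Real.log_inv]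
  field_simp
  have hI : (∫ t in Ioi 0, (P {ω | t ≤ Y ω}).toReal * u * rexp (-(t * u)))
      = ∫ t in Ioi 0, u * (P {ω | t ≤ Y ω}).toReal * rexp (-(u * t)) := by
    congr 1; funext t; ring_nf
  rw [hI, eq_div_iff hlogneg.ne, sub_mul, neg_mul, div_mul_cancel₀ _ hlogneg.ne]
  ring
end

section
/- Let Y be a positive random variable satisfying lim_{y→∞} y^2 P(Y ≥ y) = 1, and let I_2(u) = E[Y^2 e^{-uY}]. Then I_2(u) = -2 log u + o(log(1/u)) as u → 0^+, i.e. lim_{u→0^+} I_2(u)/(2 log(1/u)) = 1. -/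
open MeasureTheory Filter Real

open Set

namespace Stmt14

noncomputable def phi {Ω : Type*} [MeasurableSpace Ω] (P : Measure Ω) (Y : Ω → ℝ) (t : ℝ) : ℝ :=
  (P {ω | t ≤ Y ω}).toReal

variable {Ω : Type*} [MeasurableSpace Ω] (P : Measure Ω) [IsProbabilityMeasure P] (Y : Ω → ℝ)

lemma phi_anti : Antitone (phi P Y) := fun s t hst =>
  ENNReal.toReal_mono (measure_ne_top _ _) (measure_mono fun ω hω => le_trans hst hω)

lemma phi_meas : Measurable (phi P Y) := (phi_anti P Y).measurable

lemma phi_nonneg (t : ℝ) : 0 ≤ phi P Y t := ENNReal.toReal_nonneg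

lemma phi_le_one (t : ℝ) : phi P Y t ≤ 1 := by
  have : (P {ω | t ≤ Y ω}).toReal ≤ (P univ).toReal :=
    ENNReal.toReal_mono (measure_ne_top _ _) (measure_mono (subset_univ _))
  simpa [phi, measure_univ] using this

lemma integrable_exp_bound {f : ℝ → ℝ} {a u K : ℝ} (hu : 0 < u)
    (hf : AEStronglyMeasurable f (volume.restrict (Ioi a)))
    (hbd : ∀ t ∈ Ioi a, |f t| ≤ K * Real.exp (-u*t)) :
    IntegrableOn f (Ioi a) := by
  refine Integrable.mono' ((exp_neg_integrableOn_Ioi a hu).const_mul K) hf ?_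
  exact (ae_restrict_iff' measurableSet_Ioi).2 (ae_of_all _ fun t ht => by
    simpa [Real.norm_eq_abs] using hbd t ht)

lemma integral_exp_Ioi (a : ℝ) {u : ℝ} (hu : 0 < u) :
    ∫ t in Ioi a, Real.exp (-u*t) = Real.exp (-u*a)/u := by
  have hF : ∀ x ∈ Ici a, HasDerivAt (fun t => -Real.exp (-u*t)/u) (Real.exp (-u*x)) x := by
    intro x _
    have : HasDerivAt (fun t : ℝ => Real.exp (-u*t)) (-u * Real.exp (-u*x)) x := by
      simpa [mul_comm] using (((hasDerivAt_id x).const_mul (-u)).exp)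
    have := (this.neg).div_const u
    refine this.congr_deriv ?_
    field_simp
  have htend : Tendsto (fun t => -Real.exp (-u*t)/u) atTop (nhds 0) := by
    have : Tendsto (fun t : ℝ => Real.exp (-u*t)) atTop (nhds 0) := by
      have h1 : Tendsto (fun t : ℝ => -u*t) atTop atBot :=
        tendsto_id.const_mul_atTop_of_neg (by linarith)
      exact Real.tendsto_exp_atBot.comp h1
    have := (this.neg).div_const u
    simpa using this
  have := MeasureTheory.integral_Ioi_of_hasDerivAt_of_tendsto
    (((hF a (mem_Ici.2 le_rfl)).continuousAt).continuousWithinAt)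
    (fun x hx => hF x (mem_Ici.2 (le_of_lt (mem_Ioi.1 hx)))) (exp_neg_integrableOn_Ioi a hu) htend
  rw [this]
  ring

lemma ftc (u y : ℝ) :
    (∫ t in (0:ℝ)..y, (2*t - u*t^2) * Real.exp (-u*t)) = y^2 * Real.exp (-u*y) := by
  have h : ∀ t : ℝ, HasDerivAt (fun s : ℝ => s^2 * Real.exp (-u*s))
      ((2*t - u*t^2) * Real.exp (-u*t)) t := by
    intro t
    have h1 : HasDerivAt (fun s : ℝ => s^2) (2*t) t := by
      simpa using (hasDerivAt_pow 2 t)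
    have h2 : HasDerivAt (fun s : ℝ => Real.exp (-u*s)) (-u * Real.exp (-u*t)) t := by
      simpa [mul_comm] using (((hasDerivAt_id t).const_mul (-u)).exp)
    have := h1.mul h2
    refine this.congr_deriv ?_
    ring
  have hcont : Continuous fun t : ℝ => (2*t - u*t^2) * Real.exp (-u*t) := by continuity
  have := intervalIntegral.integral_eq_sub_of_hasDerivAt (fun t _ => h t)
    (hcont.intervalIntegrable 0 y)
  simpa using this

lemma ftc_split (u y : ℝ) :
    y^2 * Real.exp (-u*y)
      = (∫ t in (0:ℝ)..y, 2*t * Real.exp (-u*t))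
        - ∫ t in (0:ℝ)..y, u*t^2 * Real.exp (-u*t) := by
  rw [← ftc u y, ← intervalIntegral.integral_sub
    ((by continuity : Continuous fun t : ℝ => 2*t * Real.exp (-u*t)).intervalIntegrable 0 y)
    ((by continuity : Continuous fun t : ℝ => u*t^2 * Real.exp (-u*t)).intervalIntegrable 0 y)]
  congr 1; ext t; ring

lemma layercake_aux (hmeas : Measurable Y) (h0 : ∀ᵐ ω ∂P, 0 ≤ Y ω)
    {g : ℝ → ℝ} (hg : Continuous g) (hgnn : ∀ t, 0 < t → 0 ≤ g t) :
    ∫⁻ ω, ENNReal.ofReal (∫ t in (0:ℝ)..Y ω, g t) ∂P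
      = ∫⁻ t in Ioi (0:ℝ), ENNReal.ofReal (phi P Y t * g t) := by
  rw [lintegral_comp_eq_lintegral_meas_le_mul P h0 hmeas.aemeasurable
    (fun t _ => hg.intervalIntegrable 0 t)
    ((ae_restrict_iff' measurableSet_Ioi).2 (ae_of_all _ fun t ht => hgnn t ht))]
  refine setLIntegral_congr_fun measurableSet_Ioi (fun t _ => ?_)
  rw [phi, ENNReal.ofReal_mul ENNReal.toReal_nonneg, ENNReal.ofReal_toReal (measure_ne_top _ _)]


lemma key_eq (hmeas : Measurable Y) (h0 : ∀ᵐ ω ∂P, 0 ≤ Y ω) {u : ℝ} (hu : 0 < u)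
    (hi1 : IntegrableOn (fun t => phi P Y t * (2*t*Real.exp (-u*t))) (Ioi 0))
    (hi2 : IntegrableOn (fun t => phi P Y t * (u*t^2*Real.exp (-u*t))) (Ioi 0)) :
    ∫ ω, (Y ω)^2 * Real.exp (-u*Y ω) ∂P
      = (∫ t in Ioi (0:ℝ), phi P Y t * (2*t*Real.exp (-u*t)))
        - ∫ t in Ioi (0:ℝ), phi P Y t * (u*t^2*Real.exp (-u*t)) := by
  have hg1 : Continuous fun t : ℝ => 2*t*Real.exp (-u*t) := by continuity
  have hg2 : Continuous fun t : ℝ => u*t^2*Real.exp (-u*t) := by continuity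
  set F1 : Ω → ℝ := fun ω => ∫ t in (0:ℝ)..Y ω, 2*t*Real.exp (-u*t) with hF1def
  set F2 : Ω → ℝ := fun ω => ∫ t in (0:ℝ)..Y ω, u*t^2*Real.exp (-u*t) with hF2def
  have hY2meas : Measurable fun ω => (Y ω)^2 * Real.exp (-u*Y ω) :=
    ((show Continuous fun y : ℝ => y^2 * Real.exp (-u*y) by continuity).measurable).comp hmeas
  set L0 := ∫⁻ ω, ENNReal.ofReal ((Y ω)^2 * Real.exp (-u*Y ω)) ∂P with hL0def
  have hsum : L0 + ∫⁻ ω, ENNReal.ofReal (F2 ω) ∂P = ∫⁻ ω, ENNReal.ofReal (F1 ω) ∂P := by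
    rw [← lintegral_add_left (hY2meas.ennreal_ofReal)]
    refine lintegral_congr_ae (h0.mono fun ω hω => ?_)
    have hnn2 : 0 ≤ F2 ω :=
      intervalIntegral.integral_nonneg hω (fun t ht => by positivity)
    show ENNReal.ofReal ((Y ω)^2 * Real.exp (-u*Y ω)) + ENNReal.ofReal (F2 ω)
      = ENNReal.ofReal (F1 ω)
    rw [← ENNReal.ofReal_add (by positivity) hnn2]
    congr 1
    have := ftc_split u (Y ω)
    simp only [hF1def, hF2def]
    linarith [this]
  have hL1 : ∫⁻ ω, ENNReal.ofReal (F1 ω) ∂P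
      = ∫⁻ t in Ioi (0:ℝ), ENNReal.ofReal (phi P Y t * (2*t*Real.exp (-u*t))) :=
    layercake_aux P Y hmeas h0 hg1 (fun t ht => by positivity)
  have hL2 : ∫⁻ ω, ENNReal.ofReal (F2 ω) ∂P
      = ∫⁻ t in Ioi (0:ℝ), ENNReal.ofReal (phi P Y t * (u*t^2*Real.exp (-u*t))) :=
    layercake_aux P Y hmeas h0 hg2 (fun t ht => by positivity)
  have hfin1 : (∫⁻ t in Ioi (0:ℝ), ENNReal.ofReal (phi P Y t * (2*t*Real.exp (-u*t)))) ≠ ⊤ :=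
    hi1.lintegral_lt_top.ne
  have hfin2 : (∫⁻ t in Ioi (0:ℝ), ENNReal.ofReal (phi P Y t * (u*t^2*Real.exp (-u*t)))) ≠ ⊤ :=
    hi2.lintegral_lt_top.ne
  have hL2fin : (∫⁻ ω, ENNReal.ofReal (F2 ω) ∂P) ≠ ⊤ := by rw [hL2]; exact hfin2
  have hL0fin : L0 ≠ ⊤ := by
    refine ne_top_of_le_ne_top ?_ (le_self_add.trans_eq hsum)
    rw [hL1]; exact hfin1
  have e0 : ∫ ω, (Y ω)^2 * Real.exp (-u*Y ω) ∂P = L0.toReal :=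
    integral_eq_lintegral_of_nonneg_ae (ae_of_all _ fun ω => by positivity)
      hY2meas.aestronglyMeasurable
  have hm1 : Measurable fun t => phi P Y t * (2*t*Real.exp (-u*t)) :=
    (phi_meas P Y).mul hg1.measurable
  have hm2 : Measurable fun t => phi P Y t * (u*t^2*Real.exp (-u*t)) :=
    (phi_meas P Y).mul hg2.measurable
  have e1 : ∫ t in Ioi (0:ℝ), phi P Y t * (2*t*Real.exp (-u*t))
      = (∫⁻ t in Ioi (0:ℝ), ENNReal.ofReal (phi P Y t * (2*t*Real.exp (-u*t)))).toReal :=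
    integral_eq_lintegral_of_nonneg_ae
      ((ae_restrict_iff' measurableSet_Ioi).2 (ae_of_all _ fun t ht =>
        mul_nonneg (phi_nonneg P Y t) (by have : (0:ℝ) < t := ht; positivity)))
      hm1.aestronglyMeasurable
  have e2 : ∫ t in Ioi (0:ℝ), phi P Y t * (u*t^2*Real.exp (-u*t))
      = (∫⁻ t in Ioi (0:ℝ), ENNReal.ofReal (phi P Y t * (u*t^2*Real.exp (-u*t)))).toReal :=
    integral_eq_lintegral_of_nonneg_ae
      ((ae_restrict_iff' measurableSet_Ioi).2 (ae_of_all _ fun t ht =>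
        mul_nonneg (phi_nonneg P Y t) (by positivity)))
      hm2.aestronglyMeasurable
  have htr := congrArg ENNReal.toReal hsum
  rw [ENNReal.toReal_add hL0fin hL2fin, hL1, hL2] at htr
  rw [e0, e1, e2]
  linarith


lemma exp_neg_integrableOn_Ioi' (a : ℝ) {u : ℝ} (hu : 0 < u) :
    IntegrableOn (fun t : ℝ => Real.exp (-u*t)) (Ioi a) := exp_neg_integrableOn_Ioi a hu

lemma E_integrable {u M : ℝ} (hu : 0 < u) (hM : 0 < M) :
    IntegrableOn (fun t : ℝ => Real.exp (-u*t)/t) (Ioi M) := by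
  refine Integrable.mono' ((exp_neg_integrableOn_Ioi M hu).const_mul (1/M))
    (((by continuity : Continuous fun t : ℝ => Real.exp (-u*t)).measurable.div
      measurable_id).aestronglyMeasurable) ?_
  refine (ae_restrict_iff' measurableSet_Ioi).2 (ae_of_all _ fun t ht => ?_)
  have htpos : 0 < t := hM.trans ht
  rw [Real.norm_eq_abs, abs_of_nonneg (by positivity)]
  rw [one_div, ← div_eq_inv_mul]
  exact div_le_div_of_nonneg_left (by positivity) hM (le_of_lt ht)

lemma oneDiv_integrableOn {M N : ℝ} (hM : 0 < M) :
    IntegrableOn (fun t : ℝ => 1/t) (Ioc M N) := by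
  rcases le_or_gt M N with h | h
  · have := (intervalIntegral.intervalIntegrable_one_div (μ := volume) (a := M) (b := N)
      (f := fun x : ℝ => x)
      (fun x hx => by
        rw [uIcc_of_le h] at hx
        exact (lt_of_lt_of_le hM hx.1).ne')
      continuous_id.continuousOn).1
    exact this
  · rw [Ioc_eq_empty (by linarith)]
    exact integrableOn_empty

lemma E_upper {u M : ℝ} (hu : 0 < u) (hM : 1 ≤ M) (huM : M ≤ 1/u) :
    ∫ t in Ioi M, Real.exp (-u*t)/t ≤ Real.log (1/u) + 1 := by
  have hM0 : 0 < M := lt_of_lt_of_le one_pos hM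
  have hEi := E_integrable hu hM0
  have hsplit : (∫ t in Ioi M, Real.exp (-u*t)/t)
      = (∫ t in Ioc M (1/u), Real.exp (-u*t)/t) + ∫ t in Ioi (1/u), Real.exp (-u*t)/t := by
    rw [← setIntegral_union (Ioc_disjoint_Ioi le_rfl) measurableSet_Ioi
      (hEi.mono_set Ioc_subset_Ioi_self) (hEi.mono_set (Ioi_subset_Ioi huM)),
      Ioc_union_Ioi_eq_Ioi huM]
  have h1 : (∫ t in Ioc M (1/u), Real.exp (-u*t)/t) ≤ Real.log (1/u) := by
    have hle : (∫ t in Ioc M (1/u), Real.exp (-u*t)/t) ≤ ∫ t in Ioc M (1/u), 1/t := by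
      refine setIntegral_mono_on (hEi.mono_set Ioc_subset_Ioi_self) (oneDiv_integrableOn hM0)
        measurableSet_Ioc fun t ht => ?_
      have htpos : 0 < t := hM0.trans ht.1
      gcongr
      exact Real.exp_le_one_iff.2 (by nlinarith)
    have hval : (∫ t in Ioc M (1/u), 1/t) = Real.log ((1/u)/M) := by
      rw [← intervalIntegral.integral_of_le huM]
      exact integral_one_div (fun h => by
        rcases h with ⟨h1, _⟩
        have : (0:ℝ) < min M (1/u) := lt_min hM0 (by positivity)
        linarith)
    rw [hval, Real.log_div (by positivity) (by positivity)] at hle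
    have : 0 ≤ Real.log M := Real.log_nonneg hM
    linarith
  have h2 : (∫ t in Ioi (1/u), Real.exp (-u*t)/t) ≤ 1 := by
    have hle : (∫ t in Ioi (1/u), Real.exp (-u*t)/t) ≤ ∫ t in Ioi (1/u), u * Real.exp (-u*t) := by
      refine setIntegral_mono_on (hEi.mono_set (Ioi_subset_Ioi huM))
        ((exp_neg_integrableOn_Ioi _ hu).const_mul u) measurableSet_Ioi fun t ht => ?_
      have htpos : 0 < t := lt_trans (by positivity) ht
      rw [div_le_iff₀ htpos]
      have h1t : (1:ℝ) ≤ u * t := by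
        have h1 : 1/u < t := mem_Ioi.1 ht
        have h2 : u * (1/u) ≤ u * t := mul_le_mul_of_nonneg_left h1.le hu.le
        have h3 : u * (1/u) = 1 := mul_one_div_cancel hu.ne'
        linarith
      nlinarith [Real.exp_pos (-u*t)]
    have hval : (∫ t in Ioi (1/u), u * Real.exp (-u*t)) = Real.exp (-1) := by
      have harg : -u * (1/u) = -1 := by field_simp
      rw [MeasureTheory.integral_const_mul, integral_exp_Ioi _ hu, harg]
      field_simp
    rw [hval] at hle
    exact hle.trans (by rw [Real.exp_le_one_iff]; norm_num)
  linarith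

lemma E_lower {u M : ℝ} (hu : 0 < u) (hM : 1 ≤ M) (huM : M ≤ 1/u) :
    Real.log (1/u) - Real.log M - 1 ≤ ∫ t in Ioi M, Real.exp (-u*t)/t := by
  have hM0 : 0 < M := lt_of_lt_of_le one_pos hM
  have hEi := E_integrable hu hM0
  have hsplit : (∫ t in Ioi M, Real.exp (-u*t)/t)
      = (∫ t in Ioc M (1/u), Real.exp (-u*t)/t) + ∫ t in Ioi (1/u), Real.exp (-u*t)/t := by
    rw [← setIntegral_union (Ioc_disjoint_Ioi le_rfl) measurableSet_Ioi
      (hEi.mono_set Ioc_subset_Ioi_self) (hEi.mono_set (Ioi_subset_Ioi huM)),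
      Ioc_union_Ioi_eq_Ioi huM]
  have h2 : 0 ≤ ∫ t in Ioi (1/u), Real.exp (-u*t)/t := by
    refine setIntegral_nonneg measurableSet_Ioi fun t ht => ?_
    have : 0 < t := lt_trans (by positivity) ht
    positivity
  have hiu : IntegrableOn (fun t : ℝ => 1/t - u) (Ioc M (1/u)) :=
    (oneDiv_integrableOn hM0).sub (integrableOn_const measure_Ioc_lt_top.ne)
  have h1 : (∫ t in Ioc M (1/u), (1/t - u)) ≤ ∫ t in Ioc M (1/u), Real.exp (-u*t)/t := by
    refine setIntegral_mono_on hiu (hEi.mono_set Ioc_subset_Ioi_self)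
      measurableSet_Ioc fun t ht => ?_
    have htpos : 0 < t := hM0.trans ht.1
    have hexp : 1 - u*t ≤ Real.exp (-u*t) := by
      have := Real.add_one_le_exp (-u*t)
      linarith
    rw [le_div_iff₀ htpos]
    have expand : (1/t - u)*t = 1 - u*t := by field_simp
    rw [expand]
    linarith
  have hval : (∫ t in Ioc M (1/u), (1/t - u)) = (Real.log (1/u) - Real.log M) - u * (1/u - M) := by
    rw [integral_sub (oneDiv_integrableOn hM0) (integrableOn_const measure_Ioc_lt_top.ne)]
    have hv1 : (∫ t in Ioc M (1/u), 1/t) = Real.log (1/u) - Real.log M := by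
      rw [← intervalIntegral.integral_of_le huM]
      rw [integral_one_div (fun h => by
        rcases h with ⟨h1, _⟩
        have : (0:ℝ) < min M (1/u) := lt_min hM0 (by positivity)
        linarith)]
      rw [Real.log_div (by positivity) (by positivity)]
    have hv2 : (∫ _t in Ioc M (1/u), (u:ℝ)) = u * (1/u - M) := by
      rw [setIntegral_const, Real.volume_real_Ioc_of_le (by linarith), smul_eq_mul]
      ring
    rw [hv1, hv2]
  have huM1 : u * (1/u - M) ≤ 1 := by
    have : u * (1/u - M) = 1 - u*M := by field_simp
    nlinarith
  rw [hsplit]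
  rw [hval] at h1
  linarith

lemma integrableOn_phi_g1 {M₀ : ℝ} (hM₀1 : 1 ≤ M₀)
    (hbd : ∀ t, M₀ ≤ t → phi P Y t ≤ 2/t^2) {u : ℝ} (hu : 0 < u) :
    IntegrableOn (fun t => phi P Y t * (2*t*Real.exp (-u*t))) (Ioi (0:ℝ)) := by
  have hM₀ : 0 < M₀ := lt_of_lt_of_le one_pos hM₀1
  refine integrable_exp_bound (K := 2*M₀*Real.exp (u*M₀) + 4/M₀) hu
    (((phi_meas P Y).mul (by continuity : Continuous fun t : ℝ =>
      2*t*Real.exp (-u*t)).measurable).aestronglyMeasurable) ?_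
  intro t ht
  have ht0 : (0:ℝ) < t := ht
  have hE : (0:ℝ) < Real.exp (-u*t) := Real.exp_pos _
  have hE' : (1:ℝ) ≤ Real.exp (u*M₀) := Real.one_le_exp (by positivity)
  have hφ0 := phi_nonneg P Y t
  have hφ1 := phi_le_one P Y t
  rw [abs_of_nonneg (mul_nonneg hφ0 (by positivity))]
  rcases le_or_gt t M₀ with h | h
  · have hE1 : Real.exp (-u*t) ≤ 1 := Real.exp_le_one_iff.2 (by nlinarith)
    calc phi P Y t * (2*t*Real.exp (-u*t)) ≤ 1 * (2*t*Real.exp (-u*t)) :=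
          mul_le_mul_of_nonneg_right hφ1 (by positivity)
      _ = 2*t*Real.exp (-u*t) := one_mul _
      _ ≤ 2*M₀*Real.exp (-u*t) := by nlinarith
      _ ≤ (2*M₀*Real.exp (u*M₀) + 4/M₀) * Real.exp (-u*t) := by
          have h4 : (0:ℝ) < (4/M₀) * Real.exp (-u*t) := by positivity
          have h5 : (1:ℝ) * Real.exp (-u*t) ≤ Real.exp (u*M₀) * Real.exp (-u*t) :=
            mul_le_mul_of_nonneg_right hE' hE.le
          nlinarith
  · calc phi P Y t * (2*t*Real.exp (-u*t)) ≤ (2/t^2) * (2*t*Real.exp (-u*t)) :=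
          mul_le_mul_of_nonneg_right (hbd t h.le) (by positivity)
      _ = (4/t)*Real.exp (-u*t) := by field_simp; ring
      _ ≤ (4/M₀)*Real.exp (-u*t) := by
          refine mul_le_mul_of_nonneg_right ?_ hE.le
          exact div_le_div_of_nonneg_left (by norm_num) hM₀ h.le
      _ ≤ (2*M₀*Real.exp (u*M₀) + 4/M₀) * Real.exp (-u*t) := by
          have h5 : 0 ≤ (2*M₀*Real.exp (u*M₀)) * Real.exp (-u*t) := by positivity
          nlinarith

lemma integrableOn_phi_g2 {M₀ : ℝ} (hM₀1 : 1 ≤ M₀)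
    (hbd : ∀ t, M₀ ≤ t → phi P Y t ≤ 2/t^2) {u : ℝ} (hu : 0 < u) :
    IntegrableOn (fun t => phi P Y t * (u*t^2*Real.exp (-u*t))) (Ioi (0:ℝ)) := by
  have hM₀ : 0 < M₀ := lt_of_lt_of_le one_pos hM₀1
  refine integrable_exp_bound (K := u*M₀^2*Real.exp (u*M₀) + 2*u) hu
    (((phi_meas P Y).mul (by continuity : Continuous fun t : ℝ =>
      u*t^2*Real.exp (-u*t)).measurable).aestronglyMeasurable) ?_
  intro t ht
  have ht0 : (0:ℝ) < t := ht
  have hE : (0:ℝ) < Real.exp (-u*t) := Real.exp_pos _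
  have hE' : (1:ℝ) ≤ Real.exp (u*M₀) := Real.one_le_exp (by positivity)
  have hφ0 := phi_nonneg P Y t
  have hφ1 := phi_le_one P Y t
  rw [abs_of_nonneg (mul_nonneg hφ0 (by positivity))]
  rcases le_or_gt t M₀ with h | h
  · calc phi P Y t * (u*t^2*Real.exp (-u*t)) ≤ 1 * (u*t^2*Real.exp (-u*t)) :=
          mul_le_mul_of_nonneg_right hφ1 (by positivity)
      _ = u*t^2*Real.exp (-u*t) := one_mul _
      _ ≤ u*M₀^2*Real.exp (-u*t) := by
          have ht2 : t^2 ≤ M₀^2 := by nlinarith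
          have := mul_le_mul_of_nonneg_right
            (mul_le_mul_of_nonneg_left ht2 hu.le) hE.le
          linarith
      _ ≤ (u*M₀^2*Real.exp (u*M₀) + 2*u) * Real.exp (-u*t) := by
          have h4 : (0:ℝ) ≤ (2*u) * Real.exp (-u*t) := by positivity
          have h5 : (1:ℝ) * Real.exp (-u*t) ≤ Real.exp (u*M₀) * Real.exp (-u*t) :=
            mul_le_mul_of_nonneg_right hE' hE.le
          have h6 : (0:ℝ) ≤ u*M₀^2 := by positivity
          nlinarith
  · calc phi P Y t * (u*t^2*Real.exp (-u*t)) ≤ (2/t^2) * (u*t^2*Real.exp (-u*t)) :=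
          mul_le_mul_of_nonneg_right (hbd t h.le) (by positivity)
      _ = (2*u)*Real.exp (-u*t) := by field_simp
      _ ≤ (u*M₀^2*Real.exp (u*M₀) + 2*u) * Real.exp (-u*t) := by
          have h5 : 0 ≤ (u*M₀^2*Real.exp (u*M₀)) * Real.exp (-u*t) := by positivity
          nlinarith

lemma exists_tail_bound (htail : Tendsto (fun y : ℝ => y^2 * phi P Y y) atTop (nhds 1)) :
    ∃ M₀ : ℝ, 1 ≤ M₀ ∧ ∀ t, M₀ ≤ t → phi P Y t ≤ 2/t^2 := by
  have h2' : ∀ᶠ t in atTop, |t^2*phi P Y t - 1| < 1 := by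
    have := Metric.tendsto_nhds.mp htail 1 one_pos
    simpa [Real.dist_eq] using this
  obtain ⟨M₀', hM₀'⟩ := eventually_atTop.mp h2'
  refine ⟨max M₀' 1, le_max_right _ _, fun t ht => ?_⟩
  have h1 := hM₀' t (le_trans (le_max_left _ _) ht)
  have ht0 : (0:ℝ) < t := lt_of_lt_of_le (lt_of_lt_of_le one_pos (le_max_right _ _)) ht
  have habs := (abs_lt.mp h1).2
  rw [le_div_iff₀ (by positivity)]
  nlinarith

lemma B_bound {M₀ : ℝ} (hM₀1 : 1 ≤ M₀) (hbd : ∀ t, M₀ ≤ t → phi P Y t ≤ 2/t^2)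
    {u : ℝ} (hu : 0 < u) (hu1 : u ≤ 1) :
    (∫ t in Ioi (0:ℝ), phi P Y t * (u*t^2*Real.exp (-u*t))) ≤ M₀^3 + 2 := by
  have hM₀ : 0 < M₀ := lt_of_lt_of_le one_pos hM₀1
  have hi := integrableOn_phi_g2 P Y hM₀1 hbd hu
  have hsplit : (∫ t in Ioi (0:ℝ), phi P Y t * (u*t^2*Real.exp (-u*t)))
      = (∫ t in Ioc (0:ℝ) M₀, phi P Y t * (u*t^2*Real.exp (-u*t)))
        + ∫ t in Ioi M₀, phi P Y t * (u*t^2*Real.exp (-u*t)) := by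
    rw [← setIntegral_union (Ioc_disjoint_Ioi le_rfl) measurableSet_Ioi
      (hi.mono_set Ioc_subset_Ioi_self) (hi.mono_set (Ioi_subset_Ioi hM₀.le)),
      Ioc_union_Ioi_eq_Ioi hM₀.le]
  have h1 : (∫ t in Ioc (0:ℝ) M₀, phi P Y t * (u*t^2*Real.exp (-u*t))) ≤ M₀^3 := by
    have hle : (∫ t in Ioc (0:ℝ) M₀, phi P Y t * (u*t^2*Real.exp (-u*t)))
        ≤ ∫ _t in Ioc (0:ℝ) M₀, M₀^2 := by
      refine setIntegral_mono_on (hi.mono_set Ioc_subset_Ioi_self)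
        (integrableOn_const measure_Ioc_lt_top.ne) measurableSet_Ioc fun t ht => ?_
      have ht0 : 0 < t := ht.1
      have htM : t ≤ M₀ := ht.2
      have hE1 : Real.exp (-u*t) ≤ 1 := Real.exp_le_one_iff.2 (by nlinarith)
      have hE : (0:ℝ) < Real.exp (-u*t) := Real.exp_pos _
      have hφ0 := phi_nonneg P Y t
      have hφ1 := phi_le_one P Y t
      have ht2 : t^2 ≤ M₀^2 := by nlinarith
      calc phi P Y t * (u*t^2*Real.exp (-u*t)) ≤ 1 * (u*t^2*Real.exp (-u*t)) :=
            mul_le_mul_of_nonneg_right hφ1 (by positivity)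
        _ = u*(t^2*Real.exp (-u*t)) := by ring
        _ ≤ 1*(M₀^2*1) := by
            refine mul_le_mul hu1 ?_ (by positivity) (by norm_num)
            exact mul_le_mul ht2 hE1 hE.le (by positivity)
        _ = M₀^2 := by ring
    have hval : (∫ _t in Ioc (0:ℝ) M₀, (M₀^2:ℝ)) = M₀^3 := by
      rw [setIntegral_const, Real.volume_real_Ioc_of_le (by linarith), smul_eq_mul]
      ring
    linarith [hle, hval.le, hval.ge]
  have h2 : (∫ t in Ioi M₀, phi P Y t * (u*t^2*Real.exp (-u*t))) ≤ 2 := by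
    have hle : (∫ t in Ioi M₀, phi P Y t * (u*t^2*Real.exp (-u*t)))
        ≤ ∫ t in Ioi M₀, 2*(u*Real.exp (-u*t)) := by
      refine setIntegral_mono_on (hi.mono_set (Ioi_subset_Ioi hM₀.le))
        (((exp_neg_integrableOn_Ioi M₀ hu).const_mul u).const_mul 2) measurableSet_Ioi
        fun t ht => ?_
      have ht0 : 0 < t := hM₀.trans ht
      calc phi P Y t * (u*t^2*Real.exp (-u*t)) ≤ (2/t^2) * (u*t^2*Real.exp (-u*t)) :=
            mul_le_mul_of_nonneg_right (hbd t (le_of_lt ht)) (by positivity)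
        _ = 2*(u*Real.exp (-u*t)) := by field_simp
    have hval : (∫ t in Ioi M₀, 2*(u*Real.exp (-u*t))) = 2*Real.exp (-u*M₀) := by
      rw [MeasureTheory.integral_const_mul, MeasureTheory.integral_const_mul,
        integral_exp_Ioi _ hu]
      field_simp
    have hE1 : Real.exp (-u*M₀) ≤ 1 := Real.exp_le_one_iff.2 (by nlinarith)
    rw [hval] at hle
    linarith
  linarith

lemma A_tendsto (htail : Tendsto (fun y : ℝ => y^2 * phi P Y y) atTop (nhds 1)) :
    Tendsto (fun u : ℝ =>
        (∫ t in Ioi (0:ℝ), phi P Y t * (2*t*Real.exp (-u*t)))/(2*Real.log (1/u)))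
      (nhdsWithin 0 (Ioi 0)) (nhds 1) := by
  obtain ⟨M₀, hM₀1, hbd⟩ := exists_tail_bound P Y htail
  rw [Metric.tendsto_nhds]
  intro δ hδ
  set ε := min (δ/3) (1/2) with hεdef
  have hε : 0 < ε := lt_min (by linarith) one_half_pos
  have hε2 : ε ≤ 1/2 := min_le_right _ _
  have hεδ : 2*ε < δ := by
    have : ε ≤ δ/3 := min_le_left _ _
    linarith
  have hεe : ∀ᶠ t in atTop, |t^2*phi P Y t - 1| < ε := by
    have := Metric.tendsto_nhds.mp htail ε hε
    simpa [Real.dist_eq] using this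
  obtain ⟨M₁, hM₁⟩ := eventually_atTop.mp hεe
  set M := max M₁ 1 with hMdef
  have hM1 : (1:ℝ) ≤ M := le_max_right _ _
  have hM0 : (0:ℝ) < M := lt_of_lt_of_le one_pos hM1
  have hub : ∀ t, M ≤ t → phi P Y t ≤ (1+ε)/t^2 := by
    intro t ht
    have h1 := (abs_lt.mp (hM₁ t (le_trans (le_max_left _ _) ht))).2
    have ht0 : 0 < t := lt_of_lt_of_le hM0 ht
    rw [le_div_iff₀ (by positivity)]
    nlinarith
  have hlb : ∀ t, M ≤ t → (1-ε)/t^2 ≤ phi P Y t := by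
    intro t ht
    have h1 := (abs_lt.mp (hM₁ t (le_trans (le_max_left _ _) ht))).1
    have ht0 : 0 < t := lt_of_lt_of_le hM0 ht
    rw [div_le_iff₀ (by positivity)]
    nlinarith
  have h1u : Tendsto (fun u : ℝ => 1/u) (nhdsWithin 0 (Ioi 0)) atTop := by
    simpa [one_div] using (tendsto_inv_nhdsGT_zero (𝕜 := ℝ))
  have hlog : Tendsto (fun u : ℝ => Real.log (1/u)) (nhdsWithin 0 (Ioi 0)) atTop :=
    Real.tendsto_log_atTop.comp h1u
  filter_upwards [self_mem_nhdsWithin, h1u.eventually_ge_atTop M,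
    hlog.eventually_ge_atTop (max 1 ((Real.log M + M^2 + 4)/ε))] with u huu huM hℓK
  have hu : (0:ℝ) < u := huu
  set ℓ := Real.log (1/u) with hℓdef
  have hℓ1 : (1:ℝ) ≤ ℓ := le_trans (le_max_left _ _) hℓK
  have hℓ0 : (0:ℝ) < ℓ := by linarith
  have hεℓ : Real.log M + M^2 + 4 ≤ ε * ℓ := by
    have h := le_trans (le_max_right _ _) hℓK
    rw [div_le_iff₀ hε] at h
    linarith
  have hlogM : 0 ≤ Real.log M := Real.log_nonneg hM1
  have hi := integrableOn_phi_g1 P Y hM₀1 hbd hu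
  set A := ∫ t in Ioi (0:ℝ), phi P Y t * (2*t*Real.exp (-u*t)) with hAdef
  have hsplit : A = (∫ t in Ioc (0:ℝ) M, phi P Y t * (2*t*Real.exp (-u*t)))
      + ∫ t in Ioi M, phi P Y t * (2*t*Real.exp (-u*t)) := by
    rw [hAdef, ← setIntegral_union (Ioc_disjoint_Ioi le_rfl) measurableSet_Ioi
      (hi.mono_set Ioc_subset_Ioi_self) (hi.mono_set (Ioi_subset_Ioi hM0.le)),
      Ioc_union_Ioi_eq_Ioi hM0.le]
  set EM := ∫ t in Ioi M, Real.exp (-u*t)/t with hEMdef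
  have hEMi := E_integrable hu hM0
  have hIoc0 : 0 ≤ ∫ t in Ioc (0:ℝ) M, phi P Y t * (2*t*Real.exp (-u*t)) := by
    refine setIntegral_nonneg measurableSet_Ioc fun t ht => ?_
    have ht0 : 0 < t := ht.1
    exact mul_nonneg (phi_nonneg P Y t) (by positivity)
  have hIocU : (∫ t in Ioc (0:ℝ) M, phi P Y t * (2*t*Real.exp (-u*t))) ≤ 2*M^2 := by
    have hle : (∫ t in Ioc (0:ℝ) M, phi P Y t * (2*t*Real.exp (-u*t)))
        ≤ ∫ _t in Ioc (0:ℝ) M, 2*M := by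
      refine setIntegral_mono_on (hi.mono_set Ioc_subset_Ioi_self)
        (integrableOn_const measure_Ioc_lt_top.ne) measurableSet_Ioc fun t ht => ?_
      have ht0 : 0 < t := ht.1
      have htM : t ≤ M := ht.2
      have hE1 : Real.exp (-u*t) ≤ 1 := Real.exp_le_one_iff.2 (by nlinarith)
      have hE : (0:ℝ) < Real.exp (-u*t) := Real.exp_pos _
      have hφ0 := phi_nonneg P Y t
      have hφ1 := phi_le_one P Y t
      calc phi P Y t * (2*t*Real.exp (-u*t)) ≤ 1 * (2*t*Real.exp (-u*t)) :=
            mul_le_mul_of_nonneg_right hφ1 (by positivity)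
        _ = 2*(t*Real.exp (-u*t)) := by ring
        _ ≤ 2*(M*1) := by
            refine mul_le_mul_of_nonneg_left ?_ (by norm_num)
            exact mul_le_mul htM hE1 hE.le (by linarith)
        _ = 2*M := by ring
    have hval : (∫ _t in Ioc (0:ℝ) M, (2*M:ℝ)) = 2*M^2 := by
      rw [setIntegral_const, Real.volume_real_Ioc_of_le (by linarith), smul_eq_mul]
      ring
    linarith [hle, hval.le, hval.ge]
  have hIoiU : (∫ t in Ioi M, phi P Y t * (2*t*Real.exp (-u*t))) ≤ (2*(1+ε)) * EM := by
    have hle : (∫ t in Ioi M, phi P Y t * (2*t*Real.exp (-u*t)))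
        ≤ ∫ t in Ioi M, (2*(1+ε)) * (Real.exp (-u*t)/t) := by
      refine setIntegral_mono_on (hi.mono_set (Ioi_subset_Ioi hM0.le))
        (hEMi.const_mul _) measurableSet_Ioi fun t ht => ?_
      have ht0 : 0 < t := hM0.trans ht
      calc phi P Y t * (2*t*Real.exp (-u*t)) ≤ ((1+ε)/t^2) * (2*t*Real.exp (-u*t)) :=
            mul_le_mul_of_nonneg_right (hub t (le_of_lt ht)) (by positivity)
        _ = (2*(1+ε)) * (Real.exp (-u*t)/t) := by field_simp
    rwa [MeasureTheory.integral_const_mul] at hle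
  have hIoiL : (2*(1-ε)) * EM ≤ ∫ t in Ioi M, phi P Y t * (2*t*Real.exp (-u*t)) := by
    have hle : (∫ t in Ioi M, (2*(1-ε)) * (Real.exp (-u*t)/t))
        ≤ ∫ t in Ioi M, phi P Y t * (2*t*Real.exp (-u*t)) := by
      refine setIntegral_mono_on (hEMi.const_mul _)
        (hi.mono_set (Ioi_subset_Ioi hM0.le)) measurableSet_Ioi fun t ht => ?_
      have ht0 : 0 < t := hM0.trans ht
      calc (2*(1-ε)) * (Real.exp (-u*t)/t) = ((1-ε)/t^2) * (2*t*Real.exp (-u*t)) := by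
            field_simp
        _ ≤ phi P Y t * (2*t*Real.exp (-u*t)) :=
            mul_le_mul_of_nonneg_right (hlb t (le_of_lt ht)) (by positivity)
    rwa [MeasureTheory.integral_const_mul] at hle
  have hEMu : EM ≤ ℓ + 1 := E_upper hu hM1 huM
  have hEMl : ℓ - Real.log M - 1 ≤ EM := E_lower hu hM1 huM
  have hAub : A ≤ 2*ℓ*(1+2*ε) := by
    have h1 : (2*(1+ε)) * EM ≤ (2*(1+ε)) * (ℓ+1) :=
      mul_le_mul_of_nonneg_left hEMu (by linarith)
    have e1 : A ≤ 2*M^2 + (2*(1+ε))*(ℓ+1) := by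
      rw [hsplit]; linarith
    have e2 : (2*(1+ε))*(ℓ+1) = 2*ℓ + 2*(ε*ℓ) + 2 + 2*ε := by ring
    have e3 : 2*ℓ*(1+2*ε) = 2*ℓ + 4*(ε*ℓ) := by ring
    linarith
  have hAlb : 2*ℓ*(1-2*ε) ≤ A := by
    have h1 : (2*(1-ε)) * (ℓ - Real.log M - 1) ≤ (2*(1-ε)) * EM :=
      mul_le_mul_of_nonneg_left hEMl (by linarith)
    have e1 : 2*ℓ*(1-2*ε) + 2*(ε*ℓ) + (2*(ε*Real.log M) + 2*ε) ≤ (2*(1-ε)) * (ℓ - Real.log M - 1) + (2*(Real.log M) + 2) := by ring_nf; linarith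
    have e2 : 0 ≤ ε*Real.log M := mul_nonneg hε.le hlogM
    have e3 : Real.log M + 1 ≤ ε*ℓ := by linarith
    have e4 : (2*(1-ε)) * EM ≤ A := by
      rw [hsplit]; linarith
    nlinarith
  have h2ℓ : (0:ℝ) < 2*ℓ := by linarith
  have hup : A/(2*ℓ) ≤ 1+2*ε := by
    rw [div_le_iff₀ h2ℓ]
    calc A ≤ 2*ℓ*(1+2*ε) := hAub
      _ = (1+2*ε)*(2*ℓ) := by ring
  have hlo : 1-2*ε ≤ A/(2*ℓ) := by
    rw [le_div_iff₀ h2ℓ]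
    calc (1-2*ε)*(2*ℓ) = 2*ℓ*(1-2*ε) := by ring
      _ ≤ A := hAlb
  rw [Real.dist_eq, abs_lt]
  constructor <;> [linarith; linarith]

end Stmt14

/-- If `Y > 0` with `y² P(Y ≥ y) → 1` as `y → ∞`, then
`I_2(u) = E[Y² e^{-uY}]` satisfies `I_2(u) = -2 log u + o(log(1/u))` as `u → 0⁺`,
i.e. `I_2(u) / (2 log(1/u)) → 1`. -/
theorem stmt_14 {Ω : Type*} [MeasurableSpace Ω] (P : Measure Ω) [IsProbabilityMeasure P]
    (Y : Ω → ℝ) (hmeas : Measurable Y) (hpos : ∀ᵐ ω ∂P, 0 < Y ω)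
    (htail : Tendsto (fun y : ℝ => y ^ 2 * (P {ω | y ≤ Y ω}).toReal) atTop (nhds 1)) :
    Tendsto (fun u : ℝ =>
        (∫ ω, (Y ω) ^ 2 * Real.exp (-u * Y ω) ∂P) / (2 * Real.log (1 / u)))
      (nhdsWithin 0 (Set.Ioi 0)) (nhds 1) := by
  have h0 : ∀ᵐ ω ∂P, 0 ≤ Y ω := hpos.mono fun ω h => h.le
  have htail' : Tendsto (fun y : ℝ => y^2 * Stmt14.phi P Y y) atTop (nhds 1) := htail
  obtain ⟨M₀, hM₀1, hbd⟩ := Stmt14.exists_tail_bound P Y htail'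
  have hA := Stmt14.A_tendsto P Y htail'
  have h1u : Tendsto (fun u : ℝ => 1/u) (nhdsWithin 0 (Ioi 0)) atTop := by
    simpa [one_div] using (tendsto_inv_nhdsGT_zero (𝕜 := ℝ))
  have hlog : Tendsto (fun u : ℝ => Real.log (1/u)) (nhdsWithin 0 (Ioi 0)) atTop :=
    Real.tendsto_log_atTop.comp h1u
  have h2log : Tendsto (fun u : ℝ => 2*Real.log (1/u)) (nhdsWithin 0 (Ioi 0)) atTop :=
    hlog.const_mul_atTop two_pos
  have hB : Tendsto (fun u : ℝ =>
      (∫ t in Ioi (0:ℝ), Stmt14.phi P Y t * (u*t^2*Real.exp (-u*t)))/(2*Real.log (1/u)))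
      (nhdsWithin 0 (Ioi 0)) (nhds 0) := by
    have hC : Tendsto (fun u : ℝ => (M₀^3+2)/(2*Real.log (1/u)))
        (nhdsWithin 0 (Ioi 0)) (nhds 0) := by
      have h1 := h2log.inv_tendsto_atTop
      have h2 := h1.const_mul (M₀^3+2)
      simpa [div_eq_mul_inv] using h2
    have hle1 : ∀ᶠ u in nhdsWithin (0:ℝ) (Ioi 0), u ≤ 1 :=
      Filter.Eventually.filter_mono nhdsWithin_le_nhds (eventually_le_nhds one_pos)
    refine tendsto_of_tendsto_of_tendsto_of_le_of_le' tendsto_const_nhds hC ?_ ?_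
    · filter_upwards [self_mem_nhdsWithin, h2log.eventually_gt_atTop 0] with u huu hL
      refine div_nonneg ?_ hL.le
      refine setIntegral_nonneg measurableSet_Ioi fun t ht => ?_
      have ht0 : 0 < t := ht
      have hu : (0:ℝ) < u := huu
      exact mul_nonneg (Stmt14.phi_nonneg P Y t) (by positivity)
    · filter_upwards [self_mem_nhdsWithin, h2log.eventually_gt_atTop 0, hle1]
        with u huu hL hu1
      have hu : (0:ℝ) < u := huu
      exact div_le_div_of_nonneg_right (Stmt14.B_bound P Y hM₀1 hbd hu hu1) hL.le
  have hcomb := hA.sub hB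
  rw [sub_zero] at hcomb
  refine Tendsto.congr' ?_ hcomb
  filter_upwards [self_mem_nhdsWithin] with u huu
  have hu : (0:ℝ) < u := huu
  have hkey := Stmt14.key_eq P Y hmeas h0 hu
    (Stmt14.integrableOn_phi_g1 P Y hM₀1 hbd hu)
    (Stmt14.integrableOn_phi_g2 P Y hM₀1 hbd hu)
  rw [← sub_div, ← hkey]
end

section
/- For z → 0^+, the exponential integral satisfies ∫_z^∞ (e^{-x}/x) dx = -γ - log z - ∑_{m≥1} (-1)^m z^m/(m · m!), where γ is the Euler–Mascheroni constant. In particular, ∫_z^∞ (e^{-x}/x) dx + log z → -γ as z → 0^+. -/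
open MeasureTheory Real Filter

section ExpIntProofAux
open Set

namespace ExpIntAux

noncomputable def E1 (z : ℝ) : ℝ := ∫ x in Set.Ioi z, Real.exp (-x) / x

noncomputable def g (t : ℝ) : ℝ := (Real.exp (-t) - 1) / t

noncomputable def P (z : ℝ) : ℝ := ∫ t in Set.Ioc 0 z, g t

-- continuity of the integrand on positives
lemma contOn_E1int {z : ℝ} (hz : 0 < z) :
    ContinuousOn (fun x : ℝ => exp (-x) / x) (Ici z) := by
  apply ContinuousOn.div
  · fun_prop
  · fun_prop
  · intro x hx; exact (hz.trans_le hx).ne'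

lemma isBigO_E1int : (fun x : ℝ => exp (-x) / x) =O[atTop] fun x => exp (-(1/2) * x) := by
  rw [Asymptotics.isBigO_iff]
  refine ⟨1, ?_⟩
  filter_upwards [eventually_ge_atTop (1 : ℝ)] with x hx
  have hx0 : (0:ℝ) < x := by linarith
  rw [Real.norm_eq_abs, Real.norm_eq_abs, abs_of_pos (div_pos (exp_pos _) hx0),
    abs_of_pos (exp_pos _), one_mul]
  have h1 : exp (-x) / x ≤ exp (-x) := by
    rw [div_le_iff₀ hx0]
    nlinarith [exp_pos (-x)]
  refine h1.trans ?_
  apply exp_le_exp.2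
  linarith

lemma integrableOn_E1int {z : ℝ} (hz : 0 < z) :
    IntegrableOn (fun x : ℝ => exp (-x) / x) (Ioi z) :=
  integrable_of_isBigO_exp_neg one_half_pos (contOn_E1int hz)
    (by simpa using isBigO_E1int)

lemma contOn_LE {z : ℝ} (hz : 0 < z) :
    ContinuousOn (fun t : ℝ => log t * exp (-t)) (Ici z) := by
  apply ContinuousOn.mul
  · exact fun x hx => (Real.continuousAt_log (hz.trans_le hx).ne').continuousWithinAt
  · fun_prop

lemma isBigO_LE : (fun t : ℝ => log t * exp (-t)) =O[atTop] fun x => exp (-(1/2) * x) := by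
  rw [Asymptotics.isBigO_iff]
  refine ⟨2, ?_⟩
  filter_upwards [eventually_ge_atTop (1 : ℝ)] with x hx
  have hx0 : (0:ℝ) < x := by linarith
  rw [Real.norm_eq_abs, Real.norm_eq_abs, abs_of_pos (exp_pos _), abs_mul,
    abs_of_nonneg (log_nonneg hx), abs_of_pos (exp_pos _)]
  have h1 : log x ≤ x := (log_le_sub_one_of_pos hx0).trans (by linarith)
  have h2 : x ≤ 2 * exp (x/2) := by
    have := Real.add_one_le_exp (x/2)
    nlinarith [exp_pos (x/2)]
  have h3 : log x * exp (-x) ≤ x * exp (-x) :=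
    mul_le_mul_of_nonneg_right h1 (exp_pos _).le
  refine h3.trans ?_
  have : x * exp (-x) ≤ 2 * exp (x/2) * exp (-x) :=
    mul_le_mul_of_nonneg_right h2 (exp_pos _).le
  refine this.trans_eq ?_
  rw [mul_assoc, ← Real.exp_add]
  ring_nf

/-- integrability of `log t * exp (-t)` on `(0, ∞)`, extracted from the Mellin machinery. -/
lemma integrableOn_LE : IntegrableOn (fun t : ℝ => log t * exp (-t)) (Ioi 0) := by
  have H := mellin_hasDerivAt_of_isBigO_rpow (E := ℂ) (s := 1)
    (f := fun t => (Real.exp (-t) : ℂ)) (a := 2) ?_ ?_ (by norm_num) ?_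
    (by norm_num : (0:ℝ) < (1:ℂ).re)
  · have h1 := H.1
    unfold MellinConvergent at h1
    have h2 : IntegrableOn (fun t : ℝ => ((log t * exp (-t) : ℝ) : ℂ)) (Ioi 0) := by
      refine h1.congr_fun ?_ measurableSet_Ioi
      intro t ht
      simp [Complex.cpow_zero, Complex.ofReal_mul]
    have h3 : IntegrableOn (fun x : ℝ => RCLike.re ((log x * exp (-x) : ℝ) : ℂ)) (Ioi 0) := h2.re
    refine h3.congr_fun (fun t ht => ?_) measurableSet_Ioi
    exact Complex.ofReal_re _
  · refine (Continuous.continuousOn ?_).locallyIntegrableOn measurableSet_Ioi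
    exact Complex.continuous_ofReal.comp (Real.continuous_exp.comp continuous_neg)
  · rw [← Asymptotics.isBigO_norm_left]
    simp_rw [Complex.norm_real,
      Asymptotics.isBigO_norm_left]
    simpa only [neg_one_mul] using
      (isLittleO_exp_neg_mul_rpow_atTop zero_lt_one _).isBigO
  · simp_rw [neg_zero, Real.rpow_zero]
    refine Asymptotics.isBigO_const_of_tendsto (?_ : Tendsto _ _ (nhds (1 : ℂ))) one_ne_zero
    rw [(by simp : (1 : ℂ) = Real.exp (-0))]
    exact (Complex.continuous_ofReal.comp
      (Real.continuous_exp.comp continuous_neg)).continuousWithinAt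

/-- `∫_0^∞ log t e^{-t} dt = -γ`. -/
lemma integral_LE : (∫ t in Ioi (0:ℝ), log t * exp (-t)) = -eulerMascheroniConstant := by
  have h1 : HasDerivAt Complex.GammaIntegral
      (∫ t : ℝ in Ioi 0, (t : ℂ) ^ ((1:ℂ) - 1) * (Real.log t * Real.exp (-t))) 1 :=
    Complex.hasDerivAt_GammaIntegral (by norm_num)
  have h2 : Complex.Gamma =ᶠ[nhds (1:ℂ)] Complex.GammaIntegral := by
    have hopen : IsOpen {s : ℂ | 0 < s.re} := isOpen_lt continuous_const Complex.continuous_re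
    filter_upwards [hopen.mem_nhds (by norm_num : (0:ℝ) < (1:ℂ).re)] with s hs
    exact Complex.Gamma_eq_integral hs
  have h3 : HasDerivAt Complex.Gamma
      (∫ t : ℝ in Ioi 0, (t : ℂ) ^ ((1:ℂ) - 1) * (Real.log t * Real.exp (-t))) 1 :=
    h1.congr_of_eventuallyEq h2
  have h4 := Complex.hasDerivAt_Gamma_one
  have h5 := h3.unique h4
  have h6 : (∫ t : ℝ in Ioi 0, (t : ℂ) ^ ((1:ℂ) - 1) * (Real.log t * Real.exp (-t)))
      = ((∫ t in Ioi (0:ℝ), log t * exp (-t) : ℝ) : ℂ) := by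
    simp_rw [sub_self, Complex.cpow_zero, one_mul, ← Complex.ofReal_mul]
    exact integral_ofReal
  rw [h6] at h5
  exact_mod_cast h5

/-- Integration by parts on `(z, ∞)`. -/
lemma parts {z : ℝ} (hz : 0 < z) :
    (∫ t in Ioi z, log t * exp (-t)) = exp (-z) * log z + E1 z := by
  have key : (∫ t in Ioi z, (log t * exp (-t) - exp (-t) / t)) = 0 - (-(exp (-z) * log z)) := by
    apply integral_Ioi_of_hasDerivAt_of_tendsto
      (f := fun t => -(exp (-t) * log t)) (f' := fun t => log t * exp (-t) - exp (-t) / t)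
    · apply ContinuousWithinAt.neg
      apply ContinuousWithinAt.mul
      · exact (Continuous.continuousWithinAt (by fun_prop))
      · exact (Real.continuousAt_log hz.ne').continuousWithinAt
    · intro x hx
      have hx0 : (0:ℝ) < x := hz.trans hx
      have h1 : HasDerivAt (fun t : ℝ => exp (-t)) (-exp (-x)) x := by
        simpa using (hasDerivAt_neg x).exp
      have h2 : HasDerivAt Real.log x⁻¹ x := Real.hasDerivAt_log hx0.ne'
      have := (h1.mul h2).neg
      convert this using 1
      · rfl
      field_simp
      ring
    · exact ((integrableOn_LE.mono_set (Ioi_subset_Ioi hz.le)).sub (integrableOn_E1int hz))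
    · rw [show (0:ℝ) = -0 by ring]
      apply Tendsto.neg
      apply squeeze_zero_norm' (a := fun t : ℝ => t ^ 1 * exp (-t))
      · filter_upwards [eventually_ge_atTop (1 : ℝ)] with t ht
        have ht0 : (0:ℝ) < t := by linarith
        rw [norm_mul, Real.norm_eq_abs, Real.norm_eq_abs, abs_of_pos (exp_pos _),
          abs_of_nonneg (log_nonneg ht), pow_one]
        have : log t ≤ t := (log_le_sub_one_of_pos ht0).trans (by linarith)
        nlinarith [exp_pos (-t)]
      · exact tendsto_pow_mul_exp_neg_atTop_nhds_zero 1
  have hInt1 : IntegrableOn (fun t : ℝ => log t * exp (-t)) (Ioi z) :=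
    integrableOn_LE.mono_set (Ioi_subset_Ioi hz.le)
  have hInt2 := integrableOn_E1int hz
  rw [integral_sub hInt1 hInt2] at key
  unfold E1
  linarith [key]

end ExpIntAux

namespace ExpIntAux2
open ExpIntAux

lemma contOn_g : ContinuousOn g {(0:ℝ)}ᶜ := by
  apply ContinuousOn.div
  · fun_prop
  · fun_prop
  · intro x hx; exact hx

lemma g_bound {t : ℝ} (ht : 0 ≤ t) : |g t| ≤ 1 := by
  rcases ht.eq_or_lt with rfl | ht
  · simp [g]
  · rw [g, abs_div, abs_of_pos ht, div_le_one ht]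
    have h1 : exp (-t) ≤ 1 := by
      rw [Real.exp_le_one_iff]; linarith
    rw [abs_of_nonpos (by linarith)]
    have := Real.add_one_le_exp (-t)
    linarith

lemma measurable_g : Measurable g := by
  apply Measurable.div
  · fun_prop
  · exact measurable_id

lemma integrableOn_g_Icc {z : ℝ} : IntegrableOn g (Icc 0 z) := by
  apply Measure.integrableOn_of_bounded (M := 1)
  · exact (measure_Icc_lt_top).ne
  · exact measurable_g.aestronglyMeasurable
  · refine (ae_restrict_iff' measurableSet_Icc).2 (ae_of_all _ fun t ht => ?_)
    simpa using g_bound ht.1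

/-- splitting the integral over `Ioi` at a point -/
lemma split {h : ℝ → ℝ} (hint : IntegrableOn h (Ioi 0)) {z : ℝ} (hz : 0 < z) :
    (∫ t in Ioi (0:ℝ), h t) = (∫ t in Ioc 0 z, h t) + ∫ t in Ioi z, h t := by
  rw [← Ioc_union_Ioi_eq_Ioi hz.le,
    setIntegral_union (Ioc_disjoint_Ioi le_rfl) measurableSet_Ioi
      (hint.mono_set Ioc_subset_Ioi_self) (hint.mono_set (Ioi_subset_Ioi hz.le))]

lemma split_E1 {a z : ℝ} (ha : 0 < a) (haz : a ≤ z) :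
    E1 a = (∫ x in a..z, exp (-x) / x) + E1 z := by
  rw [intervalIntegral.integral_of_le haz]
  unfold E1
  rw [← Ioc_union_Ioi_eq_Ioi haz,
    setIntegral_union (Ioc_disjoint_Ioi le_rfl) measurableSet_Ioi
      ((integrableOn_E1int ha).mono_set Ioc_subset_Ioi_self)
      ((integrableOn_E1int ha).mono_set (Ioi_subset_Ioi haz))]

/-- limit of the partial integrals as the endpoint goes to `0⁺`. -/
lemma tendsto_Ioc_zero {h : ℝ → ℝ} (hint : IntegrableOn h (Icc 0 1)) :
    Tendsto (fun z : ℝ => ∫ t in Ioc 0 z, h t) (nhdsWithin 0 (Ioi 0)) (nhds 0) := by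
  have c := intervalIntegral.continuousOn_primitive (a := (0:ℝ)) (b := 1) (μ := volume) hint
  have c0 : ContinuousWithinAt (fun x : ℝ => ∫ t in Ioc 0 x, h t) (Icc 0 1) 0 :=
    c 0 ⟨le_rfl, zero_le_one⟩
  have h0 : (∫ t in Ioc (0:ℝ) 0, h t) = 0 := by simp
  have := c0.tendsto
  rw [h0] at this
  exact this.mono_left (nhdsWithin_le_iff.mpr (nhdsWithin_mono _ Ioi_subset_Ici_self (Icc_mem_nhdsGE zero_lt_one)))

lemma tendsto_P : Tendsto P (nhdsWithin 0 (Ioi 0)) (nhds 0) :=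
  tendsto_Ioc_zero integrableOn_g_Icc

lemma hasDerivAt_P {z : ℝ} (hz : 0 < z) : HasDerivAt P (g z) z := by
  have heq : P =ᶠ[nhds z] fun u => ∫ t in (0:ℝ)..u, g t := by
    filter_upwards [isOpen_Ioi.mem_nhds hz] with u hu
    rw [P, intervalIntegral.integral_of_le (le_of_lt hu)]
  have hint : IntervalIntegrable g volume 0 z := by
    rw [intervalIntegrable_iff_integrableOn_Ioc_of_le hz.le]
    exact integrableOn_g_Icc.mono_set Ioc_subset_Icc_self
  have hd : HasDerivAt (fun u => ∫ t in (0:ℝ)..u, g t) (g z) z := by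
    apply intervalIntegral.integral_hasDerivAt_right hint
    · exact measurable_g.stronglyMeasurable.stronglyMeasurableAtFilter
    · exact contOn_g.continuousAt (compl_singleton_mem_nhds hz.ne')
  exact hd.congr_of_eventuallyEq heq

lemma hasDerivAt_E1 {z : ℝ} (hz : 0 < z) : HasDerivAt E1 (-(exp (-z) / z)) z := by
  set c := z / 2 with hc
  have hc0 : 0 < c := by positivity
  have heq : E1 =ᶠ[nhds z] fun u => E1 c - ∫ x in c..u, exp (-x) / x := by
    filter_upwards [isOpen_Ioi.mem_nhds (show c < z by rw [hc]; linarith)] with u hu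
    have := split_E1 hc0 (le_of_lt hu)
    linarith
  have hint : IntervalIntegrable (fun x : ℝ => exp (-x) / x) volume c z := by
    apply ContinuousOn.intervalIntegrable
    apply (contOn_E1int hc0).mono
    rw [uIcc_of_le (by linarith)]
    exact Icc_subset_Ici_self
  have hd : HasDerivAt (fun u => ∫ x in c..u, exp (-x) / x) (exp (-z) / z) z := by
    apply intervalIntegral.integral_hasDerivAt_right hint
    · exact (Measurable.div (by fun_prop)
        measurable_id).stronglyMeasurable.stronglyMeasurableAtFilter
    · exact ((contOn_E1int hc0).continuousAt (Ici_mem_nhds (by linarith)))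
  have := ((hasDerivAt_const z (E1 c)).sub hd).congr_of_eventuallyEq heq
  simpa using this

end ExpIntAux2

namespace ExpIntAux3
open ExpIntAux ExpIntAux2

noncomputable def Phi (z : ℝ) : ℝ := E1 z + Real.log z + P z

lemma hasDerivAt_Phi {z : ℝ} (hz : 0 < z) : HasDerivAt Phi 0 z := by
  have h := ((hasDerivAt_E1 hz).add (Real.hasDerivAt_log hz.ne')).add (hasDerivAt_P hz)
  convert h using 1
  · rfl
  · rfl
  show (0:ℝ) = -(exp (-z) / z) + z⁻¹ + (exp (-z) - 1) / z
  field_simp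
  ring
  rfl

lemma Phi_const {z : ℝ} (hz : 0 < z) : Phi z = Phi 1 := by
  apply Convex.is_const_of_fderivWithin_eq_zero (convex_Ioi (0:ℝ))
    (fun x hx => ((hasDerivAt_Phi hx).differentiableAt).differentiableWithinAt)
    (fun x hx => ?_) hz (mem_Ioi.2 zero_lt_one)
  rw [fderivWithin_of_isOpen isOpen_Ioi hx, (hasDerivAt_Phi hx).hasFDerivAt.fderiv]
  ext y
  simp

lemma tendsto_E1_log :
    Tendsto (fun z : ℝ => E1 z + Real.log z) (nhdsWithin 0 (Ioi 0))
      (nhds (-eulerMascheroniConstant)) := by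
  have h2 : Tendsto (fun z : ℝ => ∫ t in Ioi z, log t * exp (-t)) (nhdsWithin 0 (Ioi 0))
      (nhds (-eulerMascheroniConstant)) := by
    have heq : ∀ᶠ z in nhdsWithin (0:ℝ) (Ioi 0),
        (∫ t in Ioi z, log t * exp (-t)) =
          -eulerMascheroniConstant - ∫ t in Ioc 0 z, log t * exp (-t) := by
      filter_upwards [self_mem_nhdsWithin] with z hz
      have h := split integrableOn_LE (mem_Ioi.1 hz)
      rw [integral_LE] at h
      linarith
    have hLE1 : IntegrableOn (fun t : ℝ => log t * exp (-t)) (Icc 0 1) := by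
      rw [integrableOn_Icc_iff_integrableOn_Ioc]
      exact integrableOn_LE.mono_set Ioc_subset_Ioi_self
    have ht := (tendsto_const_nhds (x := -eulerMascheroniConstant)
        (f := nhdsWithin (0:ℝ) (Ioi 0))).sub (tendsto_Ioc_zero hLE1)
    rw [sub_zero] at ht
    exact ht.congr' (heq.mono fun z h => h.symm)
  have h3 : Tendsto (fun z : ℝ => (1 - exp (-z)) * log z) (nhdsWithin 0 (Ioi 0)) (nhds 0) := by
    apply squeeze_zero_norm' (a := fun z : ℝ => |z * log z|)
    · filter_upwards [self_mem_nhdsWithin] with z hz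
      have hz0 : 0 < z := mem_Ioi.1 hz
      have h4 : 0 ≤ 1 - exp (-z) := by
        have : exp (-z) ≤ 1 := by rw [Real.exp_le_one_iff]; linarith
        linarith
      have h5 : 1 - exp (-z) ≤ z := by
        have := Real.add_one_le_exp (-z); linarith
      rw [norm_mul, Real.norm_eq_abs, Real.norm_eq_abs, abs_mul, abs_of_nonneg h4,
        abs_of_pos hz0]
      exact mul_le_mul_of_nonneg_right h5 (abs_nonneg _)
    · have hc : Tendsto (fun z : ℝ => |z * log z|) (nhds 0) (nhds |0 * log 0|) :=
        (continuous_abs.comp (by simpa [mul_comm] using Real.continuous_mul_log)).tendsto 0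
      simpa using hc.mono_left nhdsWithin_le_nhds
  have h1 : ∀ᶠ z in nhdsWithin (0:ℝ) (Ioi 0),
      (∫ t in Ioi z, log t * exp (-t)) + (1 - exp (-z)) * log z = E1 z + Real.log z := by
    filter_upwards [self_mem_nhdsWithin] with z hz
    have := parts (mem_Ioi.1 hz)
    ring_nf
    nlinarith [this]
  have := h2.add h3
  rw [add_zero] at this
  exact this.congr' h1

lemma tendsto_Phi :
    Tendsto Phi (nhdsWithin 0 (Ioi 0)) (nhds (-eulerMascheroniConstant)) := by
  have := tendsto_E1_log.add tendsto_P
  rw [add_zero] at this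
  exact this

lemma Phi_one : Phi 1 = -eulerMascheroniConstant := by
  have h1 : Tendsto Phi (nhdsWithin 0 (Ioi 0)) (nhds (Phi 1)) := by
    apply Tendsto.congr' _ (tendsto_const_nhds (x := Phi 1))
    filter_upwards [self_mem_nhdsWithin] with z hz
    exact (Phi_const (mem_Ioi.1 hz)).symm
  exact tendsto_nhds_unique h1 tendsto_Phi

end ExpIntAux3

namespace ExpIntAux4
open ExpIntAux ExpIntAux2 ExpIntAux3

lemma tsum_g {t : ℝ} (ht : 0 < t) :
    (∑' m : ℕ, (-1:ℝ)^(m+1) * t^m / (Nat.factorial (m+1))) = g t := by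
  have hsum : Summable (fun n : ℕ => (-t)^n / n.factorial) :=
    Real.summable_pow_div_factorial (-t)
  have hexp : exp (-t) = ∑' n : ℕ, (-t)^n / n.factorial := by
    rw [Real.exp_eq_exp_ℝ, NormedSpace.exp_eq_tsum_div]
  have hshift : (∑' m : ℕ, (-t)^(m+1) / (Nat.factorial (m+1))) = exp (-t) - 1 := by
    have h0 := hsum.tsum_eq_zero_add
    rw [hexp]
    simp only [pow_zero, Nat.factorial_zero] at h0
    rw [h0]
    norm_num
  calc (∑' m : ℕ, (-1:ℝ)^(m+1) * t^m / (Nat.factorial (m+1)))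
      = ∑' m : ℕ, ((-t)^(m+1) / (Nat.factorial (m+1))) / t := by
        congr 1
        funext m
        rw [neg_pow]
        field_simp
        ring
    _ = (∑' m : ℕ, (-t)^(m+1) / (Nat.factorial (m+1))) / t := tsum_div_const
    _ = g t := by rw [hshift]; rfl

lemma summable_series {z : ℝ} (hz : 0 < z) :
    Summable (fun m : ℕ => z^(m+1) / ((m+1) * (Nat.factorial (m+1)) : ℝ)) := by
  have h1 : Summable (fun m : ℕ => z^(m+1) / (Nat.factorial (m+1) : ℝ)) := by
    have := Real.summable_pow_div_factorial z
    exact (summable_nat_add_iff 1).2 this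
  apply Summable.of_nonneg_of_le (fun m => by positivity) (fun m => ?_) h1
  apply div_le_div_of_nonneg_left (by positivity) (by positivity)
  have h2 : (1:ℝ) ≤ (m:ℝ) + 1 := by
    have : (0:ℝ) ≤ m := Nat.cast_nonneg m
    linarith
  have h3 : (0:ℝ) < (Nat.factorial (m+1) : ℝ) := by positivity
  nlinarith

lemma norm_int {z : ℝ} (hz : 0 < z) (m : ℕ) :
    (∫ t in Ioc 0 z, ‖(-1:ℝ)^(m+1) * t^m / (Nat.factorial (m+1))‖) =
      z^(m+1) / ((m+1) * (Nat.factorial (m+1)) : ℝ) := by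
  have heq : EqOn (fun t : ℝ => ‖(-1:ℝ)^(m+1) * t^m / (Nat.factorial (m+1))‖)
      (fun t : ℝ => t^m / (Nat.factorial (m+1))) (Ioc 0 z) := by
    intro t ht
    have h1 : (0:ℝ) < t := ht.1
    simp only [Real.norm_eq_abs, abs_div, abs_mul, abs_pow, abs_neg, abs_one, one_pow, one_mul,
      abs_of_pos h1, Nat.abs_cast]
  rw [setIntegral_congr_fun measurableSet_Ioc heq, ← intervalIntegral.integral_of_le hz.le,
    intervalIntegral.integral_div, integral_pow]
  push_cast
  field_simp
  simp

lemma signed_int {z : ℝ} (hz : 0 < z) (m : ℕ) :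
    (∫ t in Ioc 0 z, (-1:ℝ)^(m+1) * t^m / (Nat.factorial (m+1))) =
      (-1:ℝ)^(m+1) * z^(m+1) / ((m+1) * (Nat.factorial (m+1)) : ℝ) := by
  rw [← intervalIntegral.integral_of_le hz.le]
  have hfun : ∀ t : ℝ, (-1:ℝ)^(m+1) * t^m / (Nat.factorial (m+1)) =
      ((-1:ℝ)^(m+1) / (Nat.factorial (m+1))) * t^m := fun t => by ring
  simp_rw [hfun]
  rw [intervalIntegral.integral_const_mul, integral_pow]
  push_cast
  field_simp
  ring

lemma P_eq_series {z : ℝ} (hz : 0 < z) :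
    P z = ∑' m : ℕ, (-1 : ℝ) ^ (m + 1) * z ^ (m + 1) /
      ((m + 1) * (Nat.factorial (m + 1))) := by
  have key := MeasureTheory.integral_tsum_of_summable_integral_norm
      (μ := volume.restrict (Ioc 0 z))
      (F := fun (m : ℕ) (t : ℝ) => (-1:ℝ)^(m+1) * t^m / (Nat.factorial (m+1))) ?_ ?_
  · have hP : P z = ∫ t in Ioc 0 z,
        ∑' m : ℕ, (-1:ℝ)^(m+1) * t^m / (Nat.factorial (m+1)) := by
      refine setIntegral_congr_fun measurableSet_Ioc (fun t ht => ?_)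
      exact (tsum_g ht.1).symm
    rw [hP, ← key]
    congr 1
    funext m
    exact signed_int hz m
  · intro m
    apply Continuous.integrableOn_Ioc
    fun_prop
  · have := summable_series hz
    apply this.congr
    intro m
    exact (norm_int hz m).symm

end ExpIntAux4

end ExpIntProofAux

open ExpIntAux ExpIntAux2 ExpIntAux3 ExpIntAux4

/-- Expansion of the exponential integral near `0`:
`∫_z^∞ e^(-x)/x dx = -γ - log z - ∑_{m ≥ 1} (-1)^m z^m / (m · m!)`, and in particular
`∫_z^∞ e^(-x)/x dx + log z → -γ` as `z → 0⁺`. -/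
theorem stmt_15 :
    (∀ z : ℝ, 0 < z →
      (∫ x in Set.Ioi z, Real.exp (-x) / x) =
        -Real.eulerMascheroniConstant - Real.log z -
          ∑' m : ℕ, (-1 : ℝ) ^ (m + 1) * z ^ (m + 1) /
            ((m + 1) * (Nat.factorial (m + 1)))) ∧
    Tendsto (fun z : ℝ => (∫ x in Set.Ioi z, Real.exp (-x) / x) + Real.log z)
      (nhdsWithin 0 (Set.Ioi 0)) (nhds (-Real.eulerMascheroniConstant)) := by
  constructor
  · intro z hz
    have h3 : (∫ x in Set.Ioi z, Real.exp (-x) / x) = ExpIntAux.E1 z := rfl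
    have h1 : ExpIntAux.E1 z = ExpIntAux3.Phi z - Real.log z - ExpIntAux.P z := by
      unfold ExpIntAux3.Phi; ring
    rw [h3, h1, ExpIntAux3.Phi_const hz, ExpIntAux3.Phi_one, ExpIntAux4.P_eq_series hz]
  · exact ExpIntAux3.tendsto_E1_log
end
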